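/- arXiv:1503.08413 — 3 statements merged into one kernel-verified Lean document; each statement's English description precedes it below -/
import Mathlib

section
/- Under the hypotheses of the auxiliary lemma (P_θ and Q_θ share the marginal P(X,Y) and the conditional law of the middle block Z_{D1+1}^{n−D2} given (X,Y), with conditional independence of the three blocks of Z given (X,Y)), the following mutual information bounds hold for every θ: I_{P_θ}(X, Y; Z) ≤ I_{Q_θ}(X, Y; Z) + (D1 + D2) log|Z_alphabet|, I_{P_θ}(Y; Z | X) ≤ I_{Q_θ}(Y; Z | X) + (D1 + D2) log|Z_alphabet|, and the same bounds with P_θ and Q_θ interchanged; consequently R_{P,n} ⊆ R_{Q,n} + (1/n)(D1 + D2) log|Z_alphabet| · U and R_{Q,n} ⊆ R_{P,n} + (1/n)(D1 + D2) log|Z_alphabet| · U, where U = [0,1]² and + denotes Minkowski sum. -/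
open scoped BigOperators
open Real

noncomputable section

namespace ACMACPaper

/-- A probability mass function on a finite type. -/
def IsPMF {α : Type*} [Fintype α] (p : α → ℝ) : Prop :=
  (∀ a, 0 ≤ p a) ∧ ∑ a, p a = 1

/-- Shannon entropy in bits of a pmf on a finite type. -/
def ent {α : Type*} [Fintype α] (p : α → ℝ) : ℝ :=
  -∑ a, p a * Real.logb 2 (p a)

/-- Mutual information `I(A;B)` of a joint pmf on `α × β` (bits). -/
def mutInfo {α β : Type*} [Fintype α] [Fintype β] (p : α × β → ℝ) : ℝ :=
  ent (fun a => ∑ b, p (a, b)) + ent (fun b => ∑ a, p (a, b)) - ent p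

/-- Conditional mutual information `I(A;B|C)` of a joint pmf on `α × β × γ` (bits),
`I(A;B|C) = H(A,C) + H(B,C) - H(A,B,C) - H(C)`. -/
def condMutInfo {α β γ : Type*} [Fintype α] [Fintype β] [Fintype γ]
    (p : α × β × γ → ℝ) : ℝ :=
  ent (fun ac : α × γ => ∑ b, p (ac.1, b, ac.2))
    + ent (fun bc : β × γ => ∑ a, p (a, bc.1, bc.2))
    - ent p - ent (fun c : γ => ∑ a, ∑ b, p (a, b, c))

/-- Conditional entropy `H(A|B)` of a joint pmf on `α × β` (bits). -/
def condEnt {α β : Type*} [Fintype α] [Fintype β] (p : α × β → ℝ) : ℝ :=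
  ent p - ent (fun b : β => ∑ a, p (a, b))

/-- Extension of a finite vector to integer indices; out-of-range symbols get a
fixed (arbitrary) default value. -/
def extVec {n : ℕ} {A : Type*} [Inhabited A] (x : Fin n → A) (j : ℤ) : A :=
  if h : 0 ≤ j ∧ j < (n : ℤ) then x ⟨j.toNat, by omega⟩ else default

/-- The finite set of possible delays `D = {-d_min, …, d_max}`. -/
def delaySet (dmin dmax : ℕ) : Finset ℤ := Finset.Icc (-(dmin : ℤ)) (dmax : ℤ)

lemma delaySet_nonempty (dmin dmax : ℕ) : (delaySet dmin dmax).Nonempty :=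
  ⟨0, by unfold delaySet; rw [Finset.mem_Icc]; omega⟩

variable {X1 X2 Y : Type*} [Fintype X1] [Fintype X2] [Fintype Y]
  [Inhabited X1] [Inhabited X2]

/-- The `n`-letter law of the asynchronous channel with delay `d`:
`P_d(y^n | x1^n, x2^n) = ∏ i, P(y_i | x_{1,i-d}, x_{2,i})`. -/
def blockLaw (W : X1 → X2 → Y → ℝ) (d : ℤ) {n : ℕ}
    (x1 : Fin n → X1) (x2 : Fin n → X2) (y : Fin n → Y) : ℝ :=
  ∏ i : Fin n, W (extVec x1 (((i : ℕ) : ℤ) - d)) (x2 i) (y i)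

/-- Average probability of error of a code, for delay `d`. -/
def avgErr (W : X1 → X2 → Y → ℝ) (d : ℤ) {n K1 K2 : ℕ}
    (f1 : Fin K1 → Fin n → X1) (f2 : Fin K1 → Fin K2 → Fin n → X2)
    (g : (Fin n → Y) → Fin K1 × Fin K2) : ℝ :=
  (1 / ((K1 : ℝ) * (K2 : ℝ))) * ∑ m1 : Fin K1, ∑ m2 : Fin K2, ∑ y : Fin n → Y,
    (if g y ≠ (m1, m2) then blockLaw W d (f1 m1) (f2 m1 m2) y else 0)

/-- Achievability for the ACMAC (informed encoder knows the message of the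
uninformed one): for every `ε > 0` there is a code whose average error
probability is at most `ε` simultaneously for every delay `d ∈ D`. -/
def ACMACAchievable (W : X1 → X2 → Y → ℝ) (dmin dmax : ℕ) (R : ℝ × ℝ) : Prop :=
  0 ≤ R.1 ∧ 0 ≤ R.2 ∧
  ∀ ε : ℝ, 0 < ε → ∃ (n K1 K2 : ℕ) (f1 : Fin K1 → Fin n → X1)
    (f2 : Fin K1 → Fin K2 → Fin n → X2) (g : (Fin n → Y) → Fin K1 × Fin K2),
      0 < n ∧ (2 : ℝ) ^ ((n : ℝ) * R.1) ≤ (K1 : ℝ) ∧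
      (2 : ℝ) ^ ((n : ℝ) * R.2) ≤ (K2 : ℝ) ∧
      ∀ d ∈ delaySet dmin dmax, avgErr W d f1 f2 g ≤ ε

/-- The capacity region of the ACMAC: the closure of the set of achievable
rate pairs. -/
def ACMACCapacity (W : X1 → X2 → Y → ℝ) (dmin dmax : ℕ) : Set (ℝ × ℝ) :=
  closure {R | ACMACAchievable W dmin dmax R}

end ACMACPaper

namespace ACMACPaper

variable {A B C : Type*} [Fintype A] [Fintype B] [Fintype C] [Inhabited C]
  {Θ : Type*} [Fintype Θ]

/-- The first block `Z_1^{D1}` of a vector `z`. -/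
def frontOf {n : ℕ} (D1 : ℕ) (z : Fin n → C) : Fin D1 → C :=
  fun j => extVec z ((j : ℕ) : ℤ)

/-- The last block `Z_{n-D2+1}^{n}` of a vector `z`. -/
def backOf {n : ℕ} (D2 : ℕ) (z : Fin n → C) : Fin D2 → C :=
  fun j => extVec z ((n : ℤ) - (D2 : ℤ) + (j : ℕ))

/-- The middle block `Z_{D1+1}^{n-D2}` of a vector `z`. -/
def midOf {n : ℕ} (D1 D2 : ℕ) (z : Fin n → C) : Fin (n - D1 - D2) → C :=
  fun j => extVec z ((D1 : ℤ) + (j : ℕ))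

/-- The factorization hypothesis of the auxiliary lemma: the two conditional
laws `P(z|x,y)` and `Q(z|x,y)` factor into independent blocks, with a *common*
conditional law `c` of the middle block `Z_{D1+1}^{n-D2}` given `(x,y)`. -/
def FactorPair (D1 D2 : ℕ) {n : ℕ}
    (P Q : ((Fin n → A) × (Fin n → B)) → (Fin n → C) → ℝ) : Prop :=
  ∃ (a a' : ((Fin n → A) × (Fin n → B)) → (Fin D1 → C) → ℝ)
    (b b' : ((Fin n → A) × (Fin n → B)) → (Fin D2 → C) → ℝ)
    (c : ((Fin n → A) × (Fin n → B)) → (Fin (n - D1 - D2) → C) → ℝ),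
    (∀ xy, IsPMF (a xy)) ∧ (∀ xy, IsPMF (a' xy)) ∧ (∀ xy, IsPMF (b xy)) ∧
    (∀ xy, IsPMF (b' xy)) ∧ (∀ xy, IsPMF (c xy)) ∧
    (∀ xy z, P xy z = a xy (frontOf D1 z) * b xy (backOf D2 z) * c xy (midOf D1 D2 z)) ∧
    (∀ xy z, Q xy z = a' xy (frontOf D1 z) * b' xy (backOf D2 z) * c xy (midOf D1 D2 z))

/-- The region `R_{P,n} = ∪_{P(x,y)} ∩_{θ∈Θ}
{(R1,R2) : R1+R2 ≤ (1/n) I_{P_θ}(X,Y;Z), R2 ≤ (1/n) I_{P_θ}(Y;Z|X)}`. -/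
def RegOf (Pk : (n : ℕ) → Θ → ((Fin n → A) × (Fin n → B)) → (Fin n → C) → ℝ)
    (n : ℕ) : Set (ℝ × ℝ) :=
  {R | 0 ≤ R.1 ∧ 0 ≤ R.2 ∧
    ∃ p : ((Fin n → A) × (Fin n → B)) → ℝ, IsPMF p ∧
      ∀ θ : Θ,
        R.1 + R.2 ≤ (1 / (n : ℝ)) *
            mutInfo (fun z : ((Fin n → A) × (Fin n → B)) × (Fin n → C) =>
              p z.1 * Pk n θ z.1 z.2) ∧
        R.2 ≤ (1 / (n : ℝ)) *
            condMutInfo (fun z : (Fin n → B) × (Fin n → C) × (Fin n → A) =>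
              p (z.2.2, z.1) * Pk n θ (z.2.2, z.1) z.2.1)}

/-- Set-theoretic limit inferior of a sequence of sets. -/
def setLiminf (S : ℕ → Set (ℝ × ℝ)) : Set (ℝ × ℝ) :=
  ⋃ N : ℕ, ⋂ n : ℕ, ⋂ (_ : N ≤ n), S n

/-- Set-theoretic limit superior of a sequence of sets. -/
def setLimsup (S : ℕ → Set (ℝ × ℝ)) : Set (ℝ × ℝ) :=
  ⋂ N : ℕ, ⋃ n : ℕ, ⋃ (_ : N ≤ n), S n

end ACMACPaper

namespace ACMACPaper

open Pointwise

variable {A B C : Type*} [Fintype A] [Fintype B] [Fintype C] [Inhabited C]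
  {Θ : Type*} [Fintype Θ]

section AuxEntropy

variable {α β γ δ : Type*} [Fintype α] [Fintype β] [Fintype γ] [Fintype δ]

lemma gibbs_term {p q : ℝ} (hp : 0 ≤ p) (hq : 0 ≤ q) (h : p ≠ 0 → q ≠ 0) :
    p * Real.logb 2 (q / p) ≤ (q - p) / Real.log 2 := by
  rcases eq_or_lt_of_le hp with h0 | hp0
  · rw [← h0]
    have hlog2 : (0:ℝ) < Real.log 2 := Real.log_pos (by norm_num)
    simp only [zero_mul, sub_zero]
    positivity
  · have hq0 : 0 < q := lt_of_le_of_ne hq (Ne.symm (h (ne_of_gt hp0)))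
    have hlog2 : (0:ℝ) < Real.log 2 := Real.log_pos (by norm_num)
    have h1 : Real.log (q / p) ≤ q / p - 1 := Real.log_le_sub_one_of_pos (by positivity)
    have h3 : p * Real.log (q / p) ≤ p * (q / p - 1) :=
      mul_le_mul_of_nonneg_left h1 hp
    have h2 : p * (q / p - 1) = q - p := by field_simp
    rw [Real.logb, mul_div_assoc', div_le_div_iff_of_pos_right hlog2]
    linarith

lemma ent_le_logb_card (p : α → ℝ) (hp : IsPMF p) :
    ent p ≤ Real.logb 2 (Fintype.card α) := by
  obtain ⟨h0, h1⟩ := hp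
  have hcard : 0 < Fintype.card α := by
    rcases Nat.eq_zero_or_pos (Fintype.card α) with h | h
    · have := Fintype.card_eq_zero_iff.mp h
      rw [Finset.univ_eq_empty, Finset.sum_empty] at h1; norm_num at h1
    · exact h
  set N : ℝ := (Fintype.card α : ℝ) with hNdef
  have hN : 0 < N := by rw [hNdef]; exact_mod_cast hcard
  have hlog2 : (0:ℝ) < Real.log 2 := Real.log_pos (by norm_num)
  have key : ∀ a, -(p a * Real.logb 2 (p a)) - p a * Real.logb 2 N
      ≤ (1/N - p a)/Real.log 2 := by
    intro a
    have hg := gibbs_term (h0 a) (show (0:ℝ) ≤ 1/N by positivity)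
      (fun _ => by positivity)
    calc -(p a * Real.logb 2 (p a)) - p a * Real.logb 2 N
        = p a * Real.logb 2 ((1/N)/p a) := by
          rcases eq_or_ne (p a) 0 with h | h
          · simp [h]
          · rw [Real.logb_div (by positivity) h, one_div, Real.logb_inv]; ring
      _ ≤ _ := hg
  have hsum := Finset.sum_le_sum (fun a (_ : a ∈ Finset.univ) => key a)
  have e1 : ∑ a, (-(p a * Real.logb 2 (p a)) - p a * Real.logb 2 N)
      = ent p - Real.logb 2 N := by
    rw [Finset.sum_sub_distrib, ← Finset.sum_mul, h1, one_mul, ent,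
      Finset.sum_neg_distrib]
  have e2 : ∑ a, ((1:ℝ)/N - p a)/Real.log 2 = 0 := by
    rw [← Finset.sum_div, Finset.sum_sub_distrib, h1, Finset.sum_const,
      Finset.card_univ, nsmul_eq_mul]
    rw [show (Fintype.card α : ℝ) * (1/N) - 1 = 0 by field_simp; rw [hNdef]; ring]
    simp
  rw [e1, e2] at hsum
  linarith

lemma ent_comp_equiv {e : α ≃ β} (q : β → ℝ) : ent (fun a => q (e a)) = ent q := by
  unfold ent
  rw [Equiv.sum_comp e (fun b => q b * Real.logb 2 (q b))]

lemma ent_map_le [DecidableEq β] (J : α → ℝ) (h0 : ∀ a, 0 ≤ J a) (f : α → β) (K : β → ℝ)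
    (hK : ∀ b, K b = ∑ a, if f a = b then J a else 0) : ent K ≤ ent J := by
  classical
  have hKa : ∀ a, J a ≤ K (f a) := by
    intro a
    rw [hK (f a)]
    have := Finset.single_le_sum (f := fun a' => if f a' = f a then J a' else 0)
      (fun i _ => by split; exacts [h0 i, le_rfl]) (Finset.mem_univ a)
    simpa using this
  have hrw : ∑ b, K b * Real.logb 2 (K b) = ∑ a, J a * Real.logb 2 (K (f a)) := by
    calc ∑ b, K b * Real.logb 2 (K b)
        = ∑ b, ∑ a, (if f a = b then J a * Real.logb 2 (K b) else 0) := by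
          refine Finset.sum_congr rfl fun b _ => ?_
          rw [hK b, Finset.sum_mul]
          exact Finset.sum_congr rfl fun a _ => by split <;> simp
      _ = ∑ a, ∑ b, (if f a = b then J a * Real.logb 2 (K b) else 0) :=
          Finset.sum_comm
      _ = ∑ a, J a * Real.logb 2 (K (f a)) := by
          refine Finset.sum_congr rfl fun a _ => ?_
          simp
  unfold ent
  rw [hrw]
  have : ∀ a ∈ Finset.univ, J a * Real.logb 2 (J a) ≤ J a * Real.logb 2 (K (f a)) := by
    intro a _
    rcases eq_or_ne (J a) 0 with h | h
    · simp [h]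
    · have hJpos : 0 < J a := lt_of_le_of_ne (h0 a) (Ne.symm h)
      exact mul_le_mul_of_nonneg_left
        (Real.logb_le_logb_of_le (by norm_num) hJpos (hKa a)) (h0 a)
  linarith [Finset.sum_le_sum this]

lemma mutInfo_nonneg (p : α × β → ℝ) (hp : IsPMF p) : 0 ≤ mutInfo p := by
  obtain ⟨h0, h1⟩ := hp
  set mA : α → ℝ := fun a => ∑ b, p (a, b) with hmA
  set mB : β → ℝ := fun b => ∑ a, p (a, b) with hmB
  have hmA0 : ∀ a, 0 ≤ mA a := fun a => Finset.sum_nonneg fun b _ => h0 (a, b)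
  have hmB0 : ∀ b, 0 ≤ mB b := fun b => Finset.sum_nonneg fun a _ => h0 (a, b)
  have hmA1 : ∑ a, mA a = 1 := by rw [← h1, Fintype.sum_prod_type]
  have hmB1 : ∑ b, mB b = 1 := by rw [← h1, Fintype.sum_prod_type_right]
  have hle : ∀ x : α × β, p x ≤ mA x.1 :=
    fun x => by
      simpa using Finset.single_le_sum (f := fun b => p (x.1, b))
        (fun b _ => h0 (x.1, b)) (Finset.mem_univ x.2)
  have hle' : ∀ x : α × β, p x ≤ mB x.2 :=
    fun x => by
      simpa using Finset.single_le_sum (f := fun a => p (a, x.2))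
        (fun a _ => h0 (a, x.2)) (Finset.mem_univ x.1)
  have eA : ent mA = -∑ x : α × β, p x * Real.logb 2 (mA x.1) := by
    unfold ent
    congr 1
    rw [Fintype.sum_prod_type]
    exact Finset.sum_congr rfl fun a _ => by
      exact Finset.sum_mul Finset.univ (fun b => p (a,b)) (Real.logb 2 (mA a))
  have eB : ent mB = -∑ x : α × β, p x * Real.logb 2 (mB x.2) := by
    unfold ent
    congr 1
    rw [Fintype.sum_prod_type_right]
    exact Finset.sum_congr rfl fun b _ => by
      exact Finset.sum_mul Finset.univ (fun a => p (a,b)) (Real.logb 2 (mB b))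
  have key : ∀ x : α × β,
      p x * Real.logb 2 (mA x.1) + p x * Real.logb 2 (mB x.2)
        - p x * Real.logb 2 (p x)
      ≤ (mA x.1 * mB x.2 - p x) / Real.log 2 := by
    intro x
    have hg := gibbs_term (h0 x)
      (mul_nonneg (hmA0 x.1) (hmB0 x.2))
      (fun hne => by
        have hpx : 0 < p x := lt_of_le_of_ne (h0 x) (Ne.symm hne)
        have h1' : 0 < mA x.1 := lt_of_lt_of_le hpx (hle x)
        have h2' : 0 < mB x.2 := lt_of_lt_of_le hpx (hle' x)
        positivity)
    refine le_trans (le_of_eq ?_) hg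
    rcases eq_or_ne (p x) 0 with h | h
    · simp [h]
    · have hpx : 0 < p x := lt_of_le_of_ne (h0 x) (Ne.symm h)
      have h1' : mA x.1 ≠ 0 := ne_of_gt (lt_of_lt_of_le hpx (hle x))
      have h2' : mB x.2 ≠ 0 := ne_of_gt (lt_of_lt_of_le hpx (hle' x))
      rw [Real.logb_div (mul_ne_zero h1' h2') h, Real.logb_mul h1' h2']
      ring
  have hsum := Finset.sum_le_sum (fun x (_ : x ∈ Finset.univ) => key x)
  have e2 : ∑ x : α × β, (mA x.1 * mB x.2 - p x) / Real.log 2 = 0 := by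
    rw [← Finset.sum_div, Finset.sum_sub_distrib, h1]
    rw [show ∑ x : α × β, mA x.1 * mB x.2 = 1 by
      rw [Fintype.sum_prod_type]
      simp_rw [← Finset.mul_sum, hmB1, mul_one, hmA1]]
    simp
  rw [e2] at hsum
  have e3 : ∑ x : α × β, (p x * Real.logb 2 (mA x.1) + p x * Real.logb 2 (mB x.2)
      - p x * Real.logb 2 (p x)) = -mutInfo p := by
    unfold mutInfo
    rw [eA, eB]
    unfold ent
    rw [Finset.sum_sub_distrib, Finset.sum_add_distrib]
    ring
  rw [e3] at hsum
  linarith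

lemma sum_rot (f : α → β → γ → ℝ) :
    ∑ a, ∑ b, ∑ c, f a b c = ∑ c, ∑ a, ∑ b, f a b c := by
  calc ∑ a, ∑ b, ∑ c, f a b c
      = ∑ a, ∑ c, ∑ b, f a b c := Finset.sum_congr rfl fun a _ => Finset.sum_comm
    _ = ∑ c, ∑ a, ∑ b, f a b c := Finset.sum_comm

lemma sum_rot' (f : α → β → γ → ℝ) :
    ∑ a, ∑ b, ∑ c, f a b c = ∑ b, ∑ c, ∑ a, f a b c :=
  (sum_rot fun b c a => f a b c).symm

lemma sum_prod3 (f : α × β × γ → ℝ) : ∑ x, f x = ∑ a, ∑ b, ∑ c, f (a, b, c) :=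
  calc ∑ x : α × β × γ, f x = ∑ a, ∑ y : β × γ, f (a, y) := Fintype.sum_prod_type f
    _ = ∑ a, ∑ b, ∑ c, f (a, b, c) :=
      Finset.sum_congr rfl fun _ _ => Fintype.sum_prod_type _

lemma sum_prod3' (f : α × β × γ → ℝ) :
    ∑ x, f x = ∑ a, ∑ c, ∑ b, f (a, b, c) :=
  (sum_prod3 f).trans (Finset.sum_congr rfl fun a _ => Finset.sum_comm)

lemma sum_pull (f : α → β → γ → δ → ℝ) :
    ∑ a, ∑ b, ∑ c, ∑ d, f a b c d = ∑ d, ∑ a, ∑ b, ∑ c, f a b c d := by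
  calc ∑ a, ∑ b, ∑ c, ∑ d, f a b c d
      = ∑ a, ∑ b, ∑ d, ∑ c, f a b c d :=
        Finset.sum_congr rfl fun a _ => Finset.sum_congr rfl fun b _ => Finset.sum_comm
    _ = ∑ a, ∑ d, ∑ b, ∑ c, f a b c d :=
        Finset.sum_congr rfl fun a _ => Finset.sum_comm
    _ = ∑ d, ∑ a, ∑ b, ∑ c, f a b c d := Finset.sum_comm

lemma sum_prod4 (f : α × (β × γ) × δ → ℝ) :
    ∑ t, f t = ∑ a, ∑ b, ∑ c, ∑ d, f (a, (b, c), d) :=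
  (sum_prod3 f).trans (Finset.sum_congr rfl fun a _ =>
    Fintype.sum_prod_type (fun bc : β × γ => ∑ d, f (a, bc, d)))

lemma condMutInfo_nonneg (p : α × β × γ → ℝ) (hp : IsPMF p) : 0 ≤ condMutInfo p := by
  obtain ⟨h0, h1⟩ := hp
  have hlog2 : (0:ℝ) < Real.log 2 := Real.log_pos (by norm_num)
  set mAC : α × γ → ℝ := fun ac => ∑ b, p (ac.1, b, ac.2) with hmAC
  set mBC : β × γ → ℝ := fun bc => ∑ a, p (a, bc.1, bc.2) with hmBC
  set mC : γ → ℝ := fun c => ∑ a, ∑ b, p (a, b, c) with hmC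
  have hmAC0 : ∀ ac, 0 ≤ mAC ac := fun ac => Finset.sum_nonneg fun b _ => h0 _
  have hmBC0 : ∀ bc, 0 ≤ mBC bc := fun bc => Finset.sum_nonneg fun a _ => h0 _
  have hmC0 : ∀ c, 0 ≤ mC c :=
    fun c => Finset.sum_nonneg fun a _ => Finset.sum_nonneg fun b _ => h0 _
  have hle1 : ∀ x : α × β × γ, p x ≤ mAC (x.1, x.2.2) := by
    intro x
    have := Finset.single_le_sum (f := fun b => p (x.1, b, x.2.2))
      (fun b _ => h0 _) (Finset.mem_univ x.2.1)
    simpa using this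
  have hle2 : ∀ x : α × β × γ, p x ≤ mBC (x.2.1, x.2.2) := by
    intro x
    have := Finset.single_le_sum (f := fun a => p (a, x.2.1, x.2.2))
      (fun a _ => h0 _) (Finset.mem_univ x.1)
    simpa using this
  have hACle : ∀ (a : α) (c : γ), mAC (a, c) ≤ mC c := by
    intro a c
    exact Finset.single_le_sum (f := fun a' => mAC (a', c))
      (fun a' _ => hmAC0 _) (Finset.mem_univ a)
  have hsumAC : ∀ c, ∑ a, mAC (a, c) = mC c := fun c => rfl
  have hsumBC : ∀ c, ∑ b, mBC (b, c) = mC c := fun c => Finset.sum_comm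
  have hC1 : ∑ c, mC c = 1 := by
    rw [← h1, sum_prod3 p]
    exact (sum_rot fun a b c => p (a, b, c)).symm
  have eAC : ent mAC = -∑ x : α × β × γ, p x * Real.logb 2 (mAC (x.1, x.2.2)) := by
    unfold ent
    congr 1
    calc ∑ ac : α × γ, mAC ac * Real.logb 2 (mAC ac)
        = ∑ a, ∑ c, mAC (a, c) * Real.logb 2 (mAC (a, c)) :=
          Fintype.sum_prod_type _
      _ = ∑ a, ∑ c, ∑ b, p (a, b, c) * Real.logb 2 (mAC (a, c)) :=
          Finset.sum_congr rfl fun a _ => Finset.sum_congr rfl fun c _ =>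
            Finset.sum_mul Finset.univ (fun b => p (a, b, c)) _
      _ = ∑ a, ∑ b, ∑ c, p (a, b, c) * Real.logb 2 (mAC (a, c)) :=
          Finset.sum_congr rfl fun a _ => Finset.sum_comm
      _ = ∑ x : α × β × γ, p x * Real.logb 2 (mAC (x.1, x.2.2)) :=
          (sum_prod3 (fun x : α × β × γ => p x * Real.logb 2 (mAC (x.1, x.2.2)))).symm
  have eBC : ent mBC = -∑ x : α × β × γ, p x * Real.logb 2 (mBC (x.2.1, x.2.2)) := by
    unfold ent
    congr 1
    calc ∑ bc : β × γ, mBC bc * Real.logb 2 (mBC bc)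
        = ∑ b, ∑ c, mBC (b, c) * Real.logb 2 (mBC (b, c)) :=
          Fintype.sum_prod_type _
      _ = ∑ b, ∑ c, ∑ a, p (a, b, c) * Real.logb 2 (mBC (b, c)) :=
          Finset.sum_congr rfl fun b _ => Finset.sum_congr rfl fun c _ =>
            Finset.sum_mul Finset.univ (fun a => p (a, b, c)) _
      _ = ∑ a, ∑ b, ∑ c, p (a, b, c) * Real.logb 2 (mBC (b, c)) := by
          rw [sum_rot (fun b c a => p (a, b, c) * Real.logb 2 (mBC (b, c)))]
      _ = ∑ x : α × β × γ, p x * Real.logb 2 (mBC (x.2.1, x.2.2)) :=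
          (sum_prod3 (fun x : α × β × γ => p x * Real.logb 2 (mBC (x.2.1, x.2.2)))).symm
  have eC : ent mC = -∑ x : α × β × γ, p x * Real.logb 2 (mC x.2.2) := by
    unfold ent
    congr 1
    calc ∑ c, mC c * Real.logb 2 (mC c)
        = ∑ c, ∑ a, ∑ b, p (a, b, c) * Real.logb 2 (mC c) := by
          refine Finset.sum_congr rfl fun c _ => ?_
          rw [Finset.sum_mul]
          exact Finset.sum_congr rfl fun a _ =>
            Finset.sum_mul Finset.univ (fun b => p (a, b, c)) _
      _ = ∑ a, ∑ b, ∑ c, p (a, b, c) * Real.logb 2 (mC c) := (sum_rot _).symm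
      _ = ∑ x : α × β × γ, p x * Real.logb 2 (mC x.2.2) :=
          (sum_prod3 (fun x : α × β × γ => p x * Real.logb 2 (mC x.2.2))).symm
  set q : α × β × γ → ℝ :=
    fun x => mAC (x.1, x.2.2) * mBC (x.2.1, x.2.2) / mC x.2.2 with hq
  have hq0 : ∀ x, 0 ≤ q x := fun x =>
    div_nonneg (mul_nonneg (hmAC0 _) (hmBC0 _)) (hmC0 _)
  have key : ∀ x : α × β × γ,
      p x * Real.logb 2 (mAC (x.1, x.2.2)) + p x * Real.logb 2 (mBC (x.2.1, x.2.2))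
        - p x * Real.logb 2 (p x) - p x * Real.logb 2 (mC x.2.2)
      ≤ (q x - p x) / Real.log 2 := by
    intro x
    have hg := gibbs_term (h0 x) (hq0 x)
      (fun hne => by
        have hpx : 0 < p x := lt_of_le_of_ne (h0 x) (Ne.symm hne)
        have hA : 0 < mAC (x.1, x.2.2) := lt_of_lt_of_le hpx (hle1 x)
        have hB : 0 < mBC (x.2.1, x.2.2) := lt_of_lt_of_le hpx (hle2 x)
        have hCp : 0 < mC x.2.2 := lt_of_lt_of_le hA (hACle _ _)
        simp only [hq]
        positivity)
    refine le_trans (le_of_eq ?_) hg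
    rcases eq_or_ne (p x) 0 with h | h
    · simp [h]
    · have hpx : 0 < p x := lt_of_le_of_ne (h0 x) (Ne.symm h)
      have hA : mAC (x.1, x.2.2) ≠ 0 := ne_of_gt (lt_of_lt_of_le hpx (hle1 x))
      have hB : mBC (x.2.1, x.2.2) ≠ 0 := ne_of_gt (lt_of_lt_of_le hpx (hle2 x))
      have hCp : mC x.2.2 ≠ 0 := ne_of_gt (lt_of_lt_of_le
        (lt_of_lt_of_le hpx (hle1 x)) (hACle _ _))
      have hqx : q x ≠ 0 := by
        simp only [hq]
        exact div_ne_zero (mul_ne_zero hA hB) hCp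
      rw [Real.logb_div hqx h]
      simp only [hq]
      rw [Real.logb_div (mul_ne_zero hA hB) hCp, Real.logb_mul hA hB]
      ring
  have hqsum : ∑ x : α × β × γ, q x ≤ 1 := by
    have e : ∑ x : α × β × γ, q x = ∑ c, mC c * mC c / mC c := by
      rw [sum_prod3 q]
      rw [sum_rot (fun a b c => q (a, b, c))]
      refine Finset.sum_congr rfl fun c _ => ?_
      have inner : ∀ a : α, ∑ b, mAC (a, c) * mBC (b, c) / mC c
          = mAC (a, c) * (mC c / mC c) := by
        intro a
        rw [← hsumBC c, ← Finset.sum_div, ← Finset.mul_sum, mul_div_assoc]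
      calc ∑ a, ∑ b, q (a, b, c)
          = ∑ a, mAC (a, c) * (mC c / mC c) := Finset.sum_congr rfl fun a _ => inner a
        _ = (∑ a, mAC (a, c)) * (mC c / mC c) := (Finset.sum_mul _ _ _).symm
        _ = mC c * mC c / mC c := by rw [hsumAC c, mul_div_assoc]
    rw [e, ← hC1]
    refine Finset.sum_le_sum fun c _ => ?_
    rcases eq_or_ne (mC c) 0 with h | h
    · rw [h]; simp
    · rw [mul_div_assoc, div_self h, mul_one]
  have hsum := Finset.sum_le_sum (fun x (_ : x ∈ Finset.univ) => key x)
  have e2 : ∑ x : α × β × γ, (q x - p x) / Real.log 2 ≤ 0 := by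
    rw [← Finset.sum_div, Finset.sum_sub_distrib, h1]
    exact div_nonpos_of_nonpos_of_nonneg (by linarith) (le_of_lt hlog2)
  have e3 : ∑ x : α × β × γ,
      (p x * Real.logb 2 (mAC (x.1, x.2.2)) + p x * Real.logb 2 (mBC (x.2.1, x.2.2))
        - p x * Real.logb 2 (p x) - p x * Real.logb 2 (mC x.2.2))
      = -condMutInfo p := by
    unfold condMutInfo
    rw [eAC, eBC, eC]
    unfold ent
    rw [Finset.sum_sub_distrib, Finset.sum_sub_distrib, Finset.sum_add_distrib]
    ring
  rw [e3] at hsum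
  linarith [le_trans hsum e2]

end AuxEntropy

section Split
variable {CC : Type*} [Inhabited CC]

lemma extVec_eq {n : ℕ} (x : Fin n → CC) (j : ℕ) (h : j < n) :
    extVec x (j : ℤ) = x ⟨j, h⟩ := by
  unfold extVec
  rw [dif_pos ⟨Int.ofNat_nonneg j, by exact_mod_cast h⟩]
  congr 1

/-- Splitting a vector into front, back and middle blocks. -/
def splitEquiv (D1 D2 : ℕ) {n : ℕ} (hn : D1 + D2 ≤ n) :
    (Fin n → CC) ≃ ((Fin D1 → CC) × (Fin D2 → CC)) × (Fin (n - D1 - D2) → CC) where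
  toFun z := ((frontOf D1 z, backOf D2 z), midOf D1 D2 z)
  invFun w := fun i =>
    if h1 : (i : ℕ) < D1 then w.1.1 ⟨i, h1⟩
    else if h2 : (i : ℕ) < n - D2 then w.2 ⟨(i : ℕ) - D1, by omega⟩
    else w.1.2 ⟨(i : ℕ) - (n - D2), by omega⟩
  left_inv := by
    intro z
    funext i
    dsimp only
    split_ifs with h1 h2
    · rw [show (frontOf D1 z) ⟨(i:ℕ), h1⟩ = extVec z ((i:ℕ) : ℤ) from rfl,
        extVec_eq z i i.isLt]
    · rw [show (midOf D1 D2 z) ⟨(i:ℕ) - D1, by omega⟩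
          = extVec z ((D1 : ℤ) + (((i:ℕ) - D1 : ℕ) : ℤ)) from rfl]
      rw [show ((D1 : ℤ) + (((i:ℕ) - D1 : ℕ) : ℤ)) = ((i : ℕ) : ℤ) by omega,
        extVec_eq z i i.isLt]
    · rw [show (backOf D2 z) ⟨(i:ℕ) - (n - D2), by omega⟩
          = extVec z ((n : ℤ) - (D2 : ℤ) + (((i:ℕ) - (n - D2) : ℕ) : ℤ)) from rfl]
      have hi : (i : ℕ) < n := i.isLt
      rw [show ((n : ℤ) - (D2 : ℤ) + (((i:ℕ) - (n - D2) : ℕ) : ℤ)) = ((i : ℕ) : ℤ) by omega,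
        extVec_eq z i i.isLt]
  right_inv := by
    intro w
    obtain ⟨⟨f, b⟩, m⟩ := w
    refine Prod.ext (Prod.ext ?_ ?_) ?_
    · funext j
      have hj : (j : ℕ) < n := by omega
      simp only [frontOf]
      rw [extVec_eq _ (j:ℕ) hj]
      dsimp only
      rw [dif_pos j.isLt]
    · funext j
      have hj : n - D2 + (j : ℕ) < n := by omega
      simp only [backOf]
      rw [show ((n : ℤ) - (D2:ℤ) + (((j:ℕ):ℕ) : ℤ)) = ((n - D2 + (j:ℕ) : ℕ) : ℤ) by omega,
        extVec_eq _ _ hj]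
      dsimp only
      rw [dif_neg (by omega), dif_neg (by omega)]
      congr 1
      simp [Fin.ext_iff]
      try omega
    · funext j
      have hj : D1 + (j : ℕ) < n := by omega
      simp only [midOf]
      rw [show ((D1 : ℤ) + (((j:ℕ):ℕ) : ℤ)) = ((D1 + (j:ℕ) : ℕ) : ℤ) by omega,
        extVec_eq _ _ hj]
      dsimp only
      rw [dif_neg (by omega), dif_pos (by omega)]
      congr 1
      simp [Fin.ext_iff]
      try omega


end Split

section CoreLemmas

/-- Core bound: if two joint pmfs on `W × (U × V)` have the same `(W,V)`-marginal,
their mutual informations `I(W ; (U,V))` differ by at most `log₂ |U|`. -/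
lemma core_mi {W U V : Type*} [Fintype W] [Fintype U] [Fintype V]
    (J J' : W × U × V → ℝ) (hJ : IsPMF J) (hJ' : IsPMF J')
    (hm : ∀ w v, ∑ u, J (w, u, v) = ∑ u, J' (w, u, v)) :
    mutInfo J ≤ mutInfo J' + Real.logb 2 (Fintype.card U) := by
  classical
  obtain ⟨hJ0, hJ1⟩ := hJ
  obtain ⟨hJ'0, hJ'1⟩ := hJ'
  set K : W × V → ℝ := fun wv => ∑ u, J (wv.1, u, wv.2) with hK
  have hK0 : ∀ wv, 0 ≤ K wv := fun wv => Finset.sum_nonneg fun u _ => hJ0 _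
  have hK1 : ∑ wv : W × V, K wv = 1 := by
    rw [Fintype.sum_prod_type, ← hJ1, sum_prod3 J]
    exact Finset.sum_congr rfl fun w _ => Finset.sum_comm
  -- marginals of J
  set mW : W → ℝ := fun w => ∑ uv : U × V, J (w, uv) with hmW
  set mUV : U × V → ℝ := fun uv => ∑ w, J (w, uv) with hmUV
  set mV : V → ℝ := fun v => ∑ w, K (w, v) with hmV
  -- (a) W-marginals of J and K agree
  have ha : (fun w => ∑ v, K (w, v)) = mW := by
    funext w
    show ∑ v, K (w, v) = ∑ uv : U × V, J (w, uv)
    rw [show ∑ uv : U × V, J (w, uv) = ∑ u, ∑ v, J (w, u, v) from Fintype.sum_prod_type _]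
    exact Finset.sum_comm
  -- (b) V-marginal of mUV equals mV
  have hb : (fun v => ∑ u, mUV (u, v)) = mV := by
    funext v
    exact Finset.sum_comm
  -- entropy inequalities
  have hmUVpmf : IsPMF mUV := by
    constructor
    · intro uv; exact Finset.sum_nonneg fun w _ => hJ0 _
    · rw [← hJ1]
      rw [show (∑ x : W × U × V, J x) = ∑ w, ∑ uv : U × V, J (w, uv) from
        Fintype.sum_prod_type _]
      exact Finset.sum_comm
  have hmUpmf : IsPMF (fun u => ∑ v, mUV (u, v)) := by
    constructor
    · intro u; exact Finset.sum_nonneg fun v _ => Finset.sum_nonneg fun w _ => hJ0 _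
    · rw [← hmUVpmf.2]
      exact (Fintype.sum_prod_type _).symm
  have hsub : ent mUV ≤ Real.logb 2 (Fintype.card U) + ent mV := by
    have h1 := mutInfo_nonneg mUV hmUVpmf
    unfold mutInfo at h1
    rw [hb] at h1
    have h2 := ent_le_logb_card _ hmUpmf
    linarith
  have hKleJ : ent K ≤ ent J := by
    refine ent_map_le J hJ0 (fun x => (x.1, x.2.2)) K (fun b => ?_)
    rw [hK]
    rw [show (∑ a : W × U × V, if (a.1, a.2.2) = b then J a else 0)
        = ∑ w, ∑ u, ∑ v, if (w, v) = b then J (w, u, v) else 0 from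
      sum_prod3 _]
    obtain ⟨b1, b2⟩ := b
    simp only [Prod.mk.injEq, ite_and]
    have hw : ∀ w, ∑ u, ∑ v, (if w = b1 then if v = b2 then J (w, u, v) else 0 else 0)
        = if w = b1 then ∑ u, J (w, u, b2) else 0 := by
      intro w
      by_cases h : w = b1
      · subst h
        simp [Finset.sum_ite_eq' Finset.univ b2]
      · simp [h]
    show ∑ u, J (b1, u, b2) = _
    rw [Finset.sum_congr rfl fun w (_ : w ∈ Finset.univ) => hw w,
      Finset.sum_ite_eq' Finset.univ b1 (fun w => ∑ u, J (w, u, b2))]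
    simp
  -- step 1
  have step1 : mutInfo J ≤ mutInfo K + Real.logb 2 (Fintype.card U) := by
    unfold mutInfo
    rw [ha]
    have : ent (fun v => ∑ w, K (w, v)) = ent mV := rfl
    rw [this]
    have e1 : ent (fun uv : U × V => ∑ w, J (w, uv)) = ent mUV := rfl
    rw [e1]
    linarith
  -- step 2
  have hmK : ∀ wv : W × V, K wv = ∑ u, J' (wv.1, u, wv.2) := fun wv => hm wv.1 wv.2
  set L : U × W × V → ℝ := fun t => J' (t.2.1, t.1, t.2.2) with hL
  have eqvL : ent L = ent J' := by
    have : L = fun t : U × W × V =>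
        J' ((⟨fun t : U × W × V => (t.2.1, t.1, t.2.2),
             fun x : W × U × V => (x.2.1, x.1, x.2.2),
             fun _ => rfl, fun _ => rfl⟩ : (U × W × V) ≃ (W × U × V)) t) := rfl
    rw [this, ent_comp_equiv]
  have hLpmf : IsPMF L := by
    constructor
    · intro t; exact hJ'0 _
    · rw [← hJ'1, sum_prod3 L, sum_prod3' J', sum_rot' (fun u w v => J' (w, u, v))]
  have step2 : mutInfo K ≤ mutInfo J' := by
    have h5 := condMutInfo_nonneg L hLpmf
    unfold condMutInfo at h5
    unfold mutInfo
    -- identify terms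
    have i1 : (fun ac : U × V => ∑ b, L (ac.1, b, ac.2))
        = (fun uv : U × V => ∑ w, J' (w, uv)) := by
      funext ac
      exact Finset.sum_congr rfl fun w _ => rfl
    have i2 : (fun bc : W × V => ∑ a, L (a, bc.1, bc.2)) = K := by
      funext bc
      rw [hmK bc]
    have i3 : (fun c : V => ∑ a : U, ∑ b : W, L (a, b, c))
        = (fun v => ∑ w, K (w, v)) := by
      funext v
      rw [show ∑ w, K (w, v) = ∑ w, ∑ u, J' (w, u, v) from
        Finset.sum_congr rfl fun w _ => hmK (w, v)]
      exact Finset.sum_comm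
    rw [i1, i2, i3, eqvL] at h5
    have e1 : ent (fun w => ∑ v, K (w, v)) = ent (fun w => ∑ uv : U × V, J' (w, uv)) := by
      congr 1
      funext w
      rw [show ∑ uv : U × V, J' (w, uv) = ∑ u, ∑ v, J' (w, u, v) from Fintype.sum_prod_type _]
      rw [show ∑ v, K (w, v) = ∑ v, ∑ u, J' (w, u, v) from
        Finset.sum_congr rfl fun v _ => hmK (w, v)]
      exact Finset.sum_comm
    have e2 : ent (fun v => ∑ w, K (w, v))
        = ent (fun v : V => ∑ u : U, ∑ w : W, L (u, w, v)) := by rw [i3]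
    rw [e1]
    have e3 : (fun uv : U × V => ∑ w, J' (w, uv)) = (fun uv : U × V => ∑ w, J' (w, uv)) := rfl
    linarith
  linarith

/-- Core bound, conditional version. -/
lemma core_cmi {Y U V X : Type*} [Fintype Y] [Fintype U] [Fintype V] [Fintype X]
    (J J' : Y × (U × V) × X → ℝ) (hJ : IsPMF J) (hJ' : IsPMF J')
    (hm : ∀ y v x, ∑ u, J (y, (u, v), x) = ∑ u, J' (y, (u, v), x)) :
    condMutInfo J ≤ condMutInfo J' + Real.logb 2 (Fintype.card U) := by
  classical
  obtain ⟨hJ0, hJ1⟩ := hJ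
  obtain ⟨hJ'0, hJ'1⟩ := hJ'
  set K : Y × V × X → ℝ := fun t => ∑ u, J (t.1, (u, t.2.1), t.2.2) with hKdef
  have hmK : ∀ t : Y × V × X, K t = ∑ u, J' (t.1, (u, t.2.1), t.2.2) :=
    fun t => hm t.1 t.2.1 t.2.2
  have hK0 : ∀ t, 0 ≤ K t := fun t => Finset.sum_nonneg fun u _ => hJ0 _
  -- (a) (Y,X)-marginals agree (for J and for J', both equal that of K)
  have haJ : (fun ac : Y × X => ∑ b : U × V, J (ac.1, b, ac.2))
      = (fun ac : Y × X => ∑ v, K (ac.1, v, ac.2)) := by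
    funext ac
    rw [Fintype.sum_prod_type (fun b : U × V => J (ac.1, b, ac.2))]
    exact Finset.sum_comm
  have haJ' : (fun ac : Y × X => ∑ b : U × V, J' (ac.1, b, ac.2))
      = (fun ac : Y × X => ∑ v, K (ac.1, v, ac.2)) := by
    funext ac
    rw [Fintype.sum_prod_type (fun b : U × V => J' (ac.1, b, ac.2))]
    rw [show ∑ v, K (ac.1, v, ac.2) = ∑ v, ∑ u, J' (ac.1, (u, v), ac.2) from
      Finset.sum_congr rfl fun v _ => hmK (ac.1, v, ac.2)]
    exact Finset.sum_comm
  -- (b) X-marginals agree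
  have hbJ : (fun x : X => ∑ y, ∑ b : U × V, J (y, b, x))
      = (fun x : X => ∑ y, ∑ v, K (y, v, x)) := by
    funext x
    refine Finset.sum_congr rfl fun y _ => ?_
    rw [Fintype.sum_prod_type (fun b : U × V => J (y, b, x))]
    exact Finset.sum_comm
  have hbJ' : (fun x : X => ∑ y, ∑ b : U × V, J' (y, b, x))
      = (fun x : X => ∑ y, ∑ v, K (y, v, x)) := by
    funext x
    refine Finset.sum_congr rfl fun y _ => ?_
    rw [Fintype.sum_prod_type (fun b : U × V => J' (y, b, x))]
    rw [show ∑ v, K (y, v, x) = ∑ v, ∑ u, J' (y, (u, v), x) from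
      Finset.sum_congr rfl fun v _ => hmK (y, v, x)]
    exact Finset.sum_comm
  -- (c) subadditivity: H_J(UV,X) <= log|U| + H_K(V,X)
  set M : U × (V × X) → ℝ := fun t => ∑ y, J (y, (t.1, t.2.1), t.2.2) with hMdef
  have hMexp : ∑ t : U × (V × X), M t = ∑ u, ∑ v, ∑ x, ∑ y, J (y, (u, v), x) :=
    (Fintype.sum_prod_type M).trans (Finset.sum_congr rfl fun u _ =>
      Fintype.sum_prod_type (fun vx : V × X => M (u, vx)))
  have hMpmf : IsPMF M := by
    constructor
    · intro t; exact Finset.sum_nonneg fun y _ => hJ0 _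
    · rw [hMexp, sum_pull (fun u v x y => J (y, (u, v), x)), ← sum_prod4 J, hJ1]
  have hc1 : ent (fun bc : (U × V) × X => ∑ y, J (y, bc.1, bc.2)) = ent M := by
    have : (fun bc : (U × V) × X => ∑ y, J (y, bc.1, bc.2))
        = fun bc : (U × V) × X => M ((Equiv.prodAssoc U V X) bc) := rfl
    rw [this, ent_comp_equiv]
  have hc2 : ent (fun vx : V × X => ∑ u, M (u, vx))
      = ent (fun bc : V × X => ∑ y, K (y, bc.1, bc.2)) := by
    congr 1
    funext vx
    exact Finset.sum_comm
  have hmUpmf : IsPMF (fun u => ∑ vx : V × X, M (u, vx)) := by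
    constructor
    · intro u; exact Finset.sum_nonneg fun vx _ => Finset.sum_nonneg fun y _ => hJ0 _
    · rw [← hMpmf.2]
      exact (Fintype.sum_prod_type M).symm
  have hsub : ent (fun bc : (U × V) × X => ∑ y, J (y, bc.1, bc.2))
      ≤ Real.logb 2 (Fintype.card U) + ent (fun bc : V × X => ∑ y, K (y, bc.1, bc.2)) := by
    have h1 := mutInfo_nonneg M hMpmf
    unfold mutInfo at h1
    have h2 := ent_le_logb_card _ hmUpmf
    rw [hc1, ← hc2]
    linarith
  -- (d) ent K ≤ ent J
  have hKleJ : ent K ≤ ent J := by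
    refine ent_map_le J hJ0 (fun t => (t.1, t.2.1.2, t.2.2)) K (fun b => ?_)
    obtain ⟨b1, b2, b3⟩ := b
    rw [show (∑ t : Y × (U × V) × X, if (t.1, t.2.1.2, t.2.2) = (b1, b2, b3) then J t else 0)
        = ∑ y, ∑ u, ∑ v, ∑ x, if (y, v, x) = (b1, b2, b3) then J (y, (u, v), x) else 0 from
      sum_prod4 _]
    simp only [Prod.mk.injEq, ite_and]
    have hin : ∀ y u, (∑ v, ∑ x,
        if y = b1 then if v = b2 then if x = b3 then J (y, (u, v), x) else 0 else 0 else 0)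
        = if y = b1 then J (y, (u, b2), b3) else 0 := by
      intro y u
      by_cases h : y = b1
      · subst h
        simp [Finset.sum_ite_eq' Finset.univ b2, Finset.sum_ite_eq' Finset.univ b3]
      · simp [h]
    rw [Finset.sum_congr rfl fun y (_ : y ∈ Finset.univ) =>
      Finset.sum_congr rfl fun u (_ : u ∈ Finset.univ) => hin y u]
    have hout : ∀ y, (∑ u, if y = b1 then J (y, (u, b2), b3) else 0)
        = if y = b1 then ∑ u, J (y, (u, b2), b3) else 0 := by
      intro y
      by_cases h : y = b1 <;> simp [h]
    rw [Finset.sum_congr rfl fun y (_ : y ∈ Finset.univ) => hout y,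
      Finset.sum_ite_eq' Finset.univ b1 (fun y => ∑ u, J (y, (u, b2), b3))]
    simp [hKdef]
  -- step 1
  have step1 : condMutInfo J ≤ condMutInfo K + Real.logb 2 (Fintype.card U) := by
    unfold condMutInfo
    rw [haJ, hbJ]
    linarith
  -- step 2
  set L : U × Y × (V × X) → ℝ := fun t => J' (t.2.1, (t.1, t.2.2.1), t.2.2.2) with hLdef
  have hLpmf : IsPMF L := by
    constructor
    · intro t; exact hJ'0 _
    · have e : ∑ t : U × Y × (V × X), L t = ∑ u, ∑ y, ∑ v, ∑ x, J' (y, (u, v), x) :=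
        (sum_prod3 L).trans (Finset.sum_congr rfl fun u _ =>
          Finset.sum_congr rfl fun y _ =>
            Fintype.sum_prod_type (fun vx : V × X => L (u, y, vx)))
      rw [e, ← hJ'1, sum_prod4 J']
      exact Finset.sum_comm
  have hs2 : (fun bc : Y × (V × X) => ∑ u, L (u, bc.1, bc.2)) = K := by
    funext t
    exact (hmK t).symm
  have hs1 : ent (fun ac : U × (V × X) => ∑ y, L (ac.1, y, ac.2))
      = ent (fun bc : (U × V) × X => ∑ y, J' (y, bc.1, bc.2)) := by
    have : (fun bc : (U × V) × X => ∑ y, J' (y, bc.1, bc.2))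
        = fun bc : (U × V) × X =>
          (fun ac : U × (V × X) => ∑ y, L (ac.1, y, ac.2)) ((Equiv.prodAssoc U V X) bc) := rfl
    rw [this]
    exact (ent_comp_equiv (e := Equiv.prodAssoc U V X)
      (fun ac : U × (V × X) => ∑ y, L (ac.1, y, ac.2))).symm
  have hs3 : ent L = ent J' := by
    have : L = fun t : U × Y × (V × X) =>
        J' ((⟨fun t : U × Y × (V × X) => (t.2.1, (t.1, t.2.2.1), t.2.2.2),
             fun x : Y × (U × V) × X => (x.2.1.1, x.1, (x.2.1.2, x.2.2)),
             fun _ => rfl, fun _ => rfl⟩ : (U × Y × (V × X)) ≃ (Y × (U × V) × X)) t) := rfl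
    rw [this, ent_comp_equiv]
  have hs4 : (fun c : V × X => ∑ a : U, ∑ b : Y, L (a, b, c))
      = (fun bc : V × X => ∑ y, K (y, bc.1, bc.2)) := by
    funext vx
    rw [show ∑ y, K (y, vx.1, vx.2) = ∑ y, ∑ u, J' (y, (u, vx.1), vx.2) from
      Finset.sum_congr rfl fun y _ => hmK (y, vx.1, vx.2)]
    exact Finset.sum_comm
  have step2 : condMutInfo K ≤ condMutInfo J' := by
    have h5 := condMutInfo_nonneg L hLpmf
    unfold condMutInfo at h5
    rw [hs2, hs1, hs3, hs4] at h5
    unfold condMutInfo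
    rw [haJ', hbJ']
    linarith
  linarith


end CoreLemmas

section Transport
variable {W Y X Z Z' : Type*} [Fintype W] [Fintype Y] [Fintype X] [Fintype Z] [Fintype Z']

lemma mutInfo_comp_equiv_snd (e : Z ≃ Z') (G : W × Z' → ℝ) :
    mutInfo (fun wz : W × Z => G (wz.1, e wz.2)) = mutInfo G := by
  unfold mutInfo
  have h1 : (fun w => ∑ z : Z, G (w, e z)) = (fun w => ∑ z' : Z', G (w, z')) := by
    funext w; exact Equiv.sum_comp e (fun z' => G (w, z'))
  have h2 : ent (fun z : Z => ∑ w, G (w, e z)) = ent (fun z' : Z' => ∑ w, G (w, z')) :=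
    ent_comp_equiv (e := e) (fun z' => ∑ w, G (w, z'))
  have h3 : ent (fun wz : W × Z => G (wz.1, e wz.2)) = ent G :=
    ent_comp_equiv
      (e := (⟨fun wz : W × Z => (wz.1, e wz.2), fun wz : W × Z' => (wz.1, e.symm wz.2),
        fun wz => by simp, fun wz => by simp⟩ : (W × Z) ≃ (W × Z'))) G
  rw [h1, h2, h3]

lemma condMutInfo_comp_equiv_mid (e : Z ≃ Z') (G : Y × Z' × X → ℝ) :
    condMutInfo (fun t : Y × Z × X => G (t.1, e t.2.1, t.2.2)) = condMutInfo G := by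
  unfold condMutInfo
  have h1 : (fun ac : Y × X => ∑ b : Z, G (ac.1, e b, ac.2))
      = (fun ac : Y × X => ∑ b : Z', G (ac.1, b, ac.2)) := by
    funext ac; exact Equiv.sum_comp e (fun b => G (ac.1, b, ac.2))
  have h2 : ent (fun bc : Z × X => ∑ a, G (a, e bc.1, bc.2))
      = ent (fun bc : Z' × X => ∑ a, G (a, bc.1, bc.2)) :=
    ent_comp_equiv
      (e := (⟨fun bc : Z × X => (e bc.1, bc.2), fun bc : Z' × X => (e.symm bc.1, bc.2),
        fun bc => by simp, fun bc => by simp⟩ : (Z × X) ≃ (Z' × X)))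
      (fun bc : Z' × X => ∑ a, G (a, bc.1, bc.2))
  have h3 : ent (fun t : Y × Z × X => G (t.1, e t.2.1, t.2.2)) = ent G :=
    ent_comp_equiv
      (e := (⟨fun t : Y × Z × X => (t.1, e t.2.1, t.2.2),
        fun t : Y × Z' × X => (t.1, e.symm t.2.1, t.2.2),
        fun t => by simp, fun t => by simp⟩ : (Y × Z × X) ≃ (Y × Z' × X))) G
  have h4 : (fun x : X => ∑ a : Y, ∑ b : Z, G (a, e b, x))
      = (fun x : X => ∑ a : Y, ∑ b : Z', G (a, b, x)) := by
    funext x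
    exact Finset.sum_congr rfl fun y _ => Equiv.sum_comp e (fun b => G (y, b, x))
  rw [h1, h2, h3, h4]

end Transport

section FactorApp

lemma factorPair_symm {D1 D2 n : ℕ}
    {P Q : ((Fin n → A) × (Fin n → B)) → (Fin n → C) → ℝ}
    (h : FactorPair D1 D2 P Q) : FactorPair D1 D2 Q P := by
  obtain ⟨a, a', b, b', c, ha, ha', hb, hb', hc, hP, hQ⟩ := h
  exact ⟨a', a, b', b, c, ha', ha, hb', hb, hc, hQ, hP⟩

lemma joint_mi_pmf {n : ℕ} (P : ((Fin n → A) × (Fin n → B)) → (Fin n → C) → ℝ)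
    (hPk : ∀ xy, IsPMF (P xy)) (p : ((Fin n → A) × (Fin n → B)) → ℝ) (hp : IsPMF p) :
    IsPMF (fun z : ((Fin n → A) × (Fin n → B)) × (Fin n → C) => p z.1 * P z.1 z.2) := by
  constructor
  · intro z; exact mul_nonneg (hp.1 _) ((hPk _).1 _)
  · calc ∑ z : ((Fin n → A) × (Fin n → B)) × (Fin n → C), p z.1 * P z.1 z.2
        = ∑ w, ∑ z, p w * P w z := Fintype.sum_prod_type _
      _ = ∑ w, p w * ∑ z, P w z := Finset.sum_congr rfl fun w _ =>
          (Finset.mul_sum _ _ _).symm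
      _ = ∑ w, p w := Finset.sum_congr rfl fun w _ => by rw [(hPk w).2, mul_one]
      _ = 1 := hp.2

lemma joint_cmi_pmf {n : ℕ} (P : ((Fin n → A) × (Fin n → B)) → (Fin n → C) → ℝ)
    (hPk : ∀ xy, IsPMF (P xy)) (p : ((Fin n → A) × (Fin n → B)) → ℝ) (hp : IsPMF p) :
    IsPMF (fun z : (Fin n → B) × (Fin n → C) × (Fin n → A) =>
      p (z.2.2, z.1) * P (z.2.2, z.1) z.2.1) := by
  constructor
  · intro z; exact mul_nonneg (hp.1 _) ((hPk _).1 _)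
  · calc ∑ z : (Fin n → B) × (Fin n → C) × (Fin n → A),
          p (z.2.2, z.1) * P (z.2.2, z.1) z.2.1
        = ∑ y, ∑ zc, ∑ x, p (x, y) * P (x, y) zc :=
          sum_prod3 (fun z : (Fin n → B) × (Fin n → C) × (Fin n → A) =>
            p (z.2.2, z.1) * P (z.2.2, z.1) z.2.1)
      _ = ∑ y, ∑ x, ∑ zc, p (x, y) * P (x, y) zc :=
          Finset.sum_congr rfl fun y _ => Finset.sum_comm
      _ = ∑ y, ∑ x, p (x, y) := by
          refine Finset.sum_congr rfl fun y _ => Finset.sum_congr rfl fun x _ => ?_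
          rw [← Finset.mul_sum, (hPk (x, y)).2, mul_one]
      _ = ∑ x, ∑ y, p (x, y) := Finset.sum_comm
      _ = 1 := by rw [← Fintype.sum_prod_type p, hp.2]

lemma factor_bounds {D1 D2 n : ℕ} (hn : D1 + D2 ≤ n)
    (P Q : ((Fin n → A) × (Fin n → B)) → (Fin n → C) → ℝ)
    (hPk : ∀ xy, IsPMF (P xy)) (hQk : ∀ xy, IsPMF (Q xy))
    (hfac : FactorPair D1 D2 P Q)
    (p : ((Fin n → A) × (Fin n → B)) → ℝ) (hp : IsPMF p) :
    (mutInfo (fun z : ((Fin n → A) × (Fin n → B)) × (Fin n → C) => p z.1 * P z.1 z.2)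
      ≤ mutInfo (fun z : ((Fin n → A) × (Fin n → B)) × (Fin n → C) => p z.1 * Q z.1 z.2)
        + ((D1 : ℝ) + (D2 : ℝ)) * Real.logb 2 (Fintype.card C))
    ∧ (condMutInfo (fun z : (Fin n → B) × (Fin n → C) × (Fin n → A) =>
          p (z.2.2, z.1) * P (z.2.2, z.1) z.2.1)
      ≤ condMutInfo (fun z : (Fin n → B) × (Fin n → C) × (Fin n → A) =>
          p (z.2.2, z.1) * Q (z.2.2, z.1) z.2.1)
        + ((D1 : ℝ) + (D2 : ℝ)) * Real.logb 2 (Fintype.card C)) := by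
  obtain ⟨a, a', b, b', c, ha, ha', hb, hb', hc, hP, hQ⟩ := hfac
  set e := splitEquiv (CC := C) D1 D2 hn with he
  have hPe : ∀ (xy : (Fin n → A) × (Fin n → B))
      (w : ((Fin D1 → C) × (Fin D2 → C)) × (Fin (n - D1 - D2) → C)),
      P xy (e.symm w) = a xy w.1.1 * b xy w.1.2 * c xy w.2 := by
    intro xy w
    rw [hP xy (e.symm w)]
    have h2 := e.apply_symm_apply w
    rw [show frontOf D1 (e.symm w) = w.1.1 from congrArg (fun t => t.1.1) h2,
        show backOf D2 (e.symm w) = w.1.2 from congrArg (fun t => t.1.2) h2,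
        show midOf D1 D2 (e.symm w) = w.2 from congrArg (fun t => t.2) h2]
  have hQe : ∀ (xy : (Fin n → A) × (Fin n → B))
      (w : ((Fin D1 → C) × (Fin D2 → C)) × (Fin (n - D1 - D2) → C)),
      Q xy (e.symm w) = a' xy w.1.1 * b' xy w.1.2 * c xy w.2 := by
    intro xy w
    rw [hQ xy (e.symm w)]
    have h2 := e.apply_symm_apply w
    rw [show frontOf D1 (e.symm w) = w.1.1 from congrArg (fun t => t.1.1) h2,
        show backOf D2 (e.symm w) = w.1.2 from congrArg (fun t => t.1.2) h2,
        show midOf D1 D2 (e.symm w) = w.2 from congrArg (fun t => t.2) h2]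
  have hcard : Real.logb 2 (Fintype.card ((Fin D1 → C) × (Fin D2 → C)))
      = ((D1 : ℝ) + (D2 : ℝ)) * Real.logb 2 (Fintype.card C) := by
    rw [show Fintype.card ((Fin D1 → C) × (Fin D2 → C)) = Fintype.card C ^ (D1 + D2) by
      rw [Fintype.card_prod, Fintype.card_fun, Fintype.card_fun, Fintype.card_fin,
        Fintype.card_fin, ← pow_add]]
    push_cast
    rw [Real.logb_pow]
    push_cast
    ring
  -- common sum fact
  have habsum : ∀ (aa : ((Fin n → A) × (Fin n → B)) → (Fin D1 → C) → ℝ)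
      (bb : ((Fin n → A) × (Fin n → B)) → (Fin D2 → C) → ℝ),
      (∀ xy, IsPMF (aa xy)) → (∀ xy, IsPMF (bb xy)) →
      ∀ xy, ∑ u : (Fin D1 → C) × (Fin D2 → C), aa xy u.1 * bb xy u.2 = 1 := by
    intro aa bb haa hbb xy
    rw [Fintype.sum_prod_type (fun u : (Fin D1 → C) × (Fin D2 → C) => aa xy u.1 * bb xy u.2),
      ← Finset.sum_mul_sum, (haa xy).2, (hbb xy).2, mul_one]
  constructor
  · -- mutual information bound
    have tP := mutInfo_comp_equiv_snd (W := (Fin n → A) × (Fin n → B)) e.symm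
      (fun z : ((Fin n → A) × (Fin n → B)) × (Fin n → C) => p z.1 * P z.1 z.2)
    have tQ := mutInfo_comp_equiv_snd (W := (Fin n → A) × (Fin n → B)) e.symm
      (fun z : ((Fin n → A) × (Fin n → B)) × (Fin n → C) => p z.1 * Q z.1 z.2)
    rw [← tP, ← tQ, ← hcard]
    refine core_mi _ _ ?_ ?_ ?_
    · constructor
      · intro wz; exact mul_nonneg (hp.1 _) ((hPk _).1 _)
      · calc ∑ wz : ((Fin n → A) × (Fin n → B)) ×
              (((Fin D1 → C) × (Fin D2 → C)) × (Fin (n - D1 - D2) → C)),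
              p wz.1 * P wz.1 (e.symm wz.2)
            = ∑ w, ∑ uvm, p w * P w (e.symm uvm) := Fintype.sum_prod_type _
          _ = ∑ w, p w * ∑ uvm, P w (e.symm uvm) := Finset.sum_congr rfl fun w _ =>
              (Finset.mul_sum _ _ _).symm
          _ = ∑ w, p w := by
              refine Finset.sum_congr rfl fun w _ => ?_
              rw [Equiv.sum_comp e.symm (P w), (hPk w).2, mul_one]
          _ = 1 := hp.2
    · constructor
      · intro wz; exact mul_nonneg (hp.1 _) ((hQk _).1 _)
      · calc ∑ wz : ((Fin n → A) × (Fin n → B)) ×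
              (((Fin D1 → C) × (Fin D2 → C)) × (Fin (n - D1 - D2) → C)),
              p wz.1 * Q wz.1 (e.symm wz.2)
            = ∑ w, ∑ uvm, p w * Q w (e.symm uvm) := Fintype.sum_prod_type _
          _ = ∑ w, p w * ∑ uvm, Q w (e.symm uvm) := Finset.sum_congr rfl fun w _ =>
              (Finset.mul_sum _ _ _).symm
          _ = ∑ w, p w := by
              refine Finset.sum_congr rfl fun w _ => ?_
              rw [Equiv.sum_comp e.symm (Q w), (hQk w).2, mul_one]
          _ = 1 := hp.2
    · intro w v
      calc ∑ u : (Fin D1 → C) × (Fin D2 → C), p w * P w (e.symm (u, v))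
          = ∑ u : (Fin D1 → C) × (Fin D2 → C), (p w * c w v) * (a w u.1 * b w u.2) := by
            refine Finset.sum_congr rfl fun u _ => ?_
            rw [hPe w (u, v)]
            ring
        _ = (p w * c w v) * ∑ u : (Fin D1 → C) × (Fin D2 → C), a w u.1 * b w u.2 :=
            (Finset.mul_sum _ _ _).symm
        _ = p w * c w v := by rw [habsum a b ha hb w, mul_one]
        _ = (p w * c w v) * ∑ u : (Fin D1 → C) × (Fin D2 → C), a' w u.1 * b' w u.2 := by
            rw [habsum a' b' ha' hb' w, mul_one]
        _ = ∑ u : (Fin D1 → C) × (Fin D2 → C), (p w * c w v) * (a' w u.1 * b' w u.2) :=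
            Finset.mul_sum _ _ _
        _ = ∑ u : (Fin D1 → C) × (Fin D2 → C), p w * Q w (e.symm (u, v)) := by
            refine Finset.sum_congr rfl fun u _ => ?_
            rw [hQe w (u, v)]
            ring
  · -- conditional mutual information bound
    have tP := condMutInfo_comp_equiv_mid (Y := Fin n → B) (X := Fin n → A) e.symm
      (fun z : (Fin n → B) × (Fin n → C) × (Fin n → A) =>
        p (z.2.2, z.1) * P (z.2.2, z.1) z.2.1)
    have tQ := condMutInfo_comp_equiv_mid (Y := Fin n → B) (X := Fin n → A) e.symm
      (fun z : (Fin n → B) × (Fin n → C) × (Fin n → A) =>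
        p (z.2.2, z.1) * Q (z.2.2, z.1) z.2.1)
    rw [← tP, ← tQ, ← hcard]
    refine core_cmi _ _ ?_ ?_ ?_
    · constructor
      · intro t; exact mul_nonneg (hp.1 _) ((hPk _).1 _)
      · calc ∑ t : (Fin n → B) ×
              (((Fin D1 → C) × (Fin D2 → C)) × (Fin (n - D1 - D2) → C)) × (Fin n → A),
              p (t.2.2, t.1) * P (t.2.2, t.1) (e.symm t.2.1)
            = ∑ y, ∑ uvm, ∑ x, p (x, y) * P (x, y) (e.symm uvm) :=
              sum_prod3 (fun t : (Fin n → B) ×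
                (((Fin D1 → C) × (Fin D2 → C)) × (Fin (n - D1 - D2) → C)) × (Fin n → A) =>
                p (t.2.2, t.1) * P (t.2.2, t.1) (e.symm t.2.1))
          _ = ∑ y, ∑ x, ∑ uvm, p (x, y) * P (x, y) (e.symm uvm) :=
              Finset.sum_congr rfl fun y _ => Finset.sum_comm
          _ = ∑ y, ∑ x, p (x, y) := by
              refine Finset.sum_congr rfl fun y _ => Finset.sum_congr rfl fun x _ => ?_
              rw [← Finset.mul_sum, Equiv.sum_comp e.symm (P (x, y)), (hPk (x, y)).2, mul_one]
          _ = ∑ x, ∑ y, p (x, y) := Finset.sum_comm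
          _ = 1 := by rw [← Fintype.sum_prod_type p, hp.2]
    · constructor
      · intro t; exact mul_nonneg (hp.1 _) ((hQk _).1 _)
      · calc ∑ t : (Fin n → B) ×
              (((Fin D1 → C) × (Fin D2 → C)) × (Fin (n - D1 - D2) → C)) × (Fin n → A),
              p (t.2.2, t.1) * Q (t.2.2, t.1) (e.symm t.2.1)
            = ∑ y, ∑ uvm, ∑ x, p (x, y) * Q (x, y) (e.symm uvm) :=
              sum_prod3 (fun t : (Fin n → B) ×
                (((Fin D1 → C) × (Fin D2 → C)) × (Fin (n - D1 - D2) → C)) × (Fin n → A) =>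
                p (t.2.2, t.1) * Q (t.2.2, t.1) (e.symm t.2.1))
          _ = ∑ y, ∑ x, ∑ uvm, p (x, y) * Q (x, y) (e.symm uvm) :=
              Finset.sum_congr rfl fun y _ => Finset.sum_comm
          _ = ∑ y, ∑ x, p (x, y) := by
              refine Finset.sum_congr rfl fun y _ => Finset.sum_congr rfl fun x _ => ?_
              rw [← Finset.mul_sum, Equiv.sum_comp e.symm (Q (x, y)), (hQk (x, y)).2, mul_one]
          _ = ∑ x, ∑ y, p (x, y) := Finset.sum_comm
          _ = 1 := by rw [← Fintype.sum_prod_type p, hp.2]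
    · intro y v x
      calc ∑ u : (Fin D1 → C) × (Fin D2 → C), p (x, y) * P (x, y) (e.symm (u, v))
          = ∑ u : (Fin D1 → C) × (Fin D2 → C),
              (p (x, y) * c (x, y) v) * (a (x, y) u.1 * b (x, y) u.2) := by
            refine Finset.sum_congr rfl fun u _ => ?_
            rw [hPe (x, y) (u, v)]
            ring
        _ = (p (x, y) * c (x, y) v) * ∑ u : (Fin D1 → C) × (Fin D2 → C),
              a (x, y) u.1 * b (x, y) u.2 := (Finset.mul_sum _ _ _).symm
        _ = p (x, y) * c (x, y) v := by rw [habsum a b ha hb (x, y), mul_one]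
        _ = (p (x, y) * c (x, y) v) * ∑ u : (Fin D1 → C) × (Fin D2 → C),
              a' (x, y) u.1 * b' (x, y) u.2 := by rw [habsum a' b' ha' hb' (x, y), mul_one]
        _ = ∑ u : (Fin D1 → C) × (Fin D2 → C),
              (p (x, y) * c (x, y) v) * (a' (x, y) u.1 * b' (x, y) u.2) :=
            Finset.mul_sum _ _ _
        _ = ∑ u : (Fin D1 → C) × (Fin D2 → C), p (x, y) * Q (x, y) (e.symm (u, v)) := by
            refine Finset.sum_congr rfl fun u _ => ?_
            rw [hQe (x, y) (u, v)]
            ring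

end FactorApp

section Region

open Pointwise

lemma mem_smul_Icc {s w1 w2 : ℝ} (hs : 0 ≤ s) (h1 : 0 ≤ w1) (h1' : w1 ≤ s)
    (h2 : 0 ≤ w2) (h2' : w2 ≤ s) :
    ((w1, w2) : ℝ × ℝ) ∈ s • Set.Icc ((0, 0) : ℝ × ℝ) (1, 1) := by
  rcases eq_or_lt_of_le hs with h | h
  · have hw1 : w1 = 0 := le_antisymm (by rw [h]; exact h1') h1
    have hw2 : w2 = 0 := le_antisymm (by rw [h]; exact h2') h2
    refine Set.mem_smul_set.mpr ⟨(0, 0), ?_, ?_⟩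
    · constructor <;> simp [Prod.le_def]
    · rw [hw1, hw2, ← h]
      simp [Prod.smul_mk]
      rfl
  · refine Set.mem_smul_set.mpr ⟨(w1 / s, w2 / s), ?_, ?_⟩
    · constructor
      · constructor <;> positivity
      · constructor <;> exact div_le_one_of_le₀ (by assumption) (le_of_lt h)
    · have hne : s ≠ 0 := ne_of_gt h
      show (s * (w1 / s), s * (w2 / s)) = (w1, w2)
      rw [mul_div_cancel₀ _ hne, mul_div_cancel₀ _ hne]

lemma region_subset_of_bounds
    (Pk Qk : (n : ℕ) → Θ → ((Fin n → A) × (Fin n → B)) → (Fin n → C) → ℝ)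
    (hQk : ∀ n θ xy, IsPMF (Qk n θ xy)) (n : ℕ) (δ : ℝ) (hδ : 0 ≤ δ)
    (hb : ∀ (θ : Θ) (p : ((Fin n → A) × (Fin n → B)) → ℝ), IsPMF p →
      (mutInfo (fun z : ((Fin n → A) × (Fin n → B)) × (Fin n → C) =>
          p z.1 * Pk n θ z.1 z.2)
        ≤ mutInfo (fun z : ((Fin n → A) × (Fin n → B)) × (Fin n → C) =>
          p z.1 * Qk n θ z.1 z.2) + δ)
      ∧ (condMutInfo (fun z : (Fin n → B) × (Fin n → C) × (Fin n → A) =>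
          p (z.2.2, z.1) * Pk n θ (z.2.2, z.1) z.2.1)
        ≤ condMutInfo (fun z : (Fin n → B) × (Fin n → C) × (Fin n → A) =>
          p (z.2.2, z.1) * Qk n θ (z.2.2, z.1) z.2.1) + δ)) :
    RegOf Pk n ⊆ RegOf Qk n + ((1 / (n : ℝ)) * δ) • Set.Icc ((0, 0) : ℝ × ℝ) (1, 1) := by
  intro R hR
  obtain ⟨hR1, hR2, p, hp, hcond⟩ := hR
  set s : ℝ := (1 / (n : ℝ)) * δ with hsdef
  have hinv : (0:ℝ) ≤ 1 / (n : ℝ) := by positivity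
  have hs : 0 ≤ s := mul_nonneg hinv hδ
  -- the Q-side quantities
  have hQmi : ∀ θ : Θ, R.1 + R.2 ≤ (1 / (n : ℝ)) *
      mutInfo (fun z : ((Fin n → A) × (Fin n → B)) × (Fin n → C) =>
        p z.1 * Qk n θ z.1 z.2) + s := by
    intro θ
    have h1 := (hcond θ).1
    have h2 := mul_le_mul_of_nonneg_left ((hb θ p hp).1) hinv
    rw [mul_add] at h2
    linarith
  have hQcmi : ∀ θ : Θ, R.2 ≤ (1 / (n : ℝ)) *
      condMutInfo (fun z : (Fin n → B) × (Fin n → C) × (Fin n → A) =>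
        p (z.2.2, z.1) * Qk n θ (z.2.2, z.1) z.2.1) + s := by
    intro θ
    have h1 := (hcond θ).2
    have h2 := mul_le_mul_of_nonneg_left ((hb θ p hp).2) hinv
    rw [mul_add] at h2
    linarith
  have hQmi0 : ∀ θ : Θ, 0 ≤ (1 / (n : ℝ)) *
      mutInfo (fun z : ((Fin n → A) × (Fin n → B)) × (Fin n → C) =>
        p z.1 * Qk n θ z.1 z.2) :=
    fun θ => mul_nonneg hinv (mutInfo_nonneg _ (joint_mi_pmf _ (hQk n θ) p hp))
  have hQcmi0 : ∀ θ : Θ, 0 ≤ (1 / (n : ℝ)) *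
      condMutInfo (fun z : (Fin n → B) × (Fin n → C) × (Fin n → A) =>
        p (z.2.2, z.1) * Qk n θ (z.2.2, z.1) z.2.1) :=
    fun θ => mul_nonneg hinv (condMutInfo_nonneg _ (joint_cmi_pmf _ (hQk n θ) p hp))
  rcases le_total R.2 s with hcase | hcase
  · -- R.2 ≤ s
    refine Set.mem_add.mpr ⟨(max (R.1 + R.2 - s) 0, 0),
      ⟨le_max_right _ 0, le_rfl, p, hp, fun θ => ⟨?_, ?_⟩⟩,
      (R.1 - max (R.1 + R.2 - s) 0, R.2), mem_smul_Icc hs ?_ ?_ hR2 hcase, ?_⟩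
    · simp only [add_zero]
      exact max_le (by linarith [hQmi θ]) (hQmi0 θ)
    · exact hQcmi0 θ
    · simp only [sub_nonneg]
      exact max_le (by linarith) hR1
    · have : R.1 - s ≤ max (R.1 + R.2 - s) 0 :=
        le_trans (by linarith) (le_max_left _ 0)
      linarith
    · have : max (R.1 + R.2 - s) 0 + (R.1 - max (R.1 + R.2 - s) 0) = R.1 := by ring
      exact Prod.ext (by simpa using this) (by simp)
  · -- s ≤ R.2
    refine Set.mem_add.mpr ⟨(R.1, R.2 - s),
      ⟨hR1, show (0:ℝ) ≤ R.2 - s by linarith, p, hp, fun θ => ⟨?_, ?_⟩⟩,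
      (0, s), mem_smul_Icc hs le_rfl hs hs le_rfl, ?_⟩
    · dsimp only
      linarith [hQmi θ]
    · dsimp only
      linarith [hQcmi θ]
    · exact Prod.ext (by simp) (by simp)

end Region


/-- **Auxiliary lemma, quantitative form.** Under the block-factorization
hypothesis with a common middle-block law, the mutual informations under `P_θ`
and `Q_θ` differ by at most `(D1+D2)·log|C|` (in both directions), and
consequently each region is contained in the other after fattening by
`(1/n)(D1+D2)log|C| · [0,1]²` (Minkowski sum). -/
theorem aux_lemma_bounds (D1 D2 : ℕ)
    (Pk Qk : (n : ℕ) → Θ → ((Fin n → A) × (Fin n → B)) → (Fin n → C) → ℝ)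
    (hPk : ∀ n θ xy, IsPMF (Pk n θ xy)) (hQk : ∀ n θ xy, IsPMF (Qk n θ xy))
    (n : ℕ) (hn : D1 + D2 ≤ n)
    (hfac : ∀ θ : Θ, FactorPair D1 D2 (Pk n θ) (Qk n θ)) :
    (∀ (θ : Θ) (p : ((Fin n → A) × (Fin n → B)) → ℝ), IsPMF p →
      (mutInfo (fun z : ((Fin n → A) × (Fin n → B)) × (Fin n → C) =>
            p z.1 * Pk n θ z.1 z.2)
          ≤ mutInfo (fun z : ((Fin n → A) × (Fin n → B)) × (Fin n → C) =>
            p z.1 * Qk n θ z.1 z.2)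
            + ((D1 : ℝ) + (D2 : ℝ)) * Real.logb 2 (Fintype.card C)) ∧
      (condMutInfo (fun z : (Fin n → B) × (Fin n → C) × (Fin n → A) =>
            p (z.2.2, z.1) * Pk n θ (z.2.2, z.1) z.2.1)
          ≤ condMutInfo (fun z : (Fin n → B) × (Fin n → C) × (Fin n → A) =>
            p (z.2.2, z.1) * Qk n θ (z.2.2, z.1) z.2.1)
            + ((D1 : ℝ) + (D2 : ℝ)) * Real.logb 2 (Fintype.card C)) ∧
      (mutInfo (fun z : ((Fin n → A) × (Fin n → B)) × (Fin n → C) =>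
            p z.1 * Qk n θ z.1 z.2)
          ≤ mutInfo (fun z : ((Fin n → A) × (Fin n → B)) × (Fin n → C) =>
            p z.1 * Pk n θ z.1 z.2)
            + ((D1 : ℝ) + (D2 : ℝ)) * Real.logb 2 (Fintype.card C)) ∧
      (condMutInfo (fun z : (Fin n → B) × (Fin n → C) × (Fin n → A) =>
            p (z.2.2, z.1) * Qk n θ (z.2.2, z.1) z.2.1)
          ≤ condMutInfo (fun z : (Fin n → B) × (Fin n → C) × (Fin n → A) =>
            p (z.2.2, z.1) * Pk n θ (z.2.2, z.1) z.2.1)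
            + ((D1 : ℝ) + (D2 : ℝ)) * Real.logb 2 (Fintype.card C))) ∧
    RegOf Pk n ⊆ RegOf Qk n +
      ((1 / (n : ℝ)) * ((D1 : ℝ) + (D2 : ℝ)) * Real.logb 2 (Fintype.card C)) •
        Set.Icc ((0, 0) : ℝ × ℝ) (1, 1) ∧
    RegOf Qk n ⊆ RegOf Pk n +
      ((1 / (n : ℝ)) * ((D1 : ℝ) + (D2 : ℝ)) * Real.logb 2 (Fintype.card C)) •
        Set.Icc ((0, 0) : ℝ × ℝ) (1, 1) := by
  have hδ : 0 ≤ ((D1 : ℝ) + (D2 : ℝ)) * Real.logb 2 (Fintype.card C) := by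
    have h1 : (1:ℝ) ≤ (Fintype.card C : ℝ) := by
      exact_mod_cast Fintype.card_pos
    exact mul_nonneg (by positivity) (Real.logb_nonneg (by norm_num) h1)
  have hbPQ := fun (θ : Θ) (p : ((Fin n → A) × (Fin n → B)) → ℝ) (hp : IsPMF p) =>
    factor_bounds hn (Pk n θ) (Qk n θ) (hPk n θ) (hQk n θ) (hfac θ) p hp
  have hbQP := fun (θ : Θ) (p : ((Fin n → A) × (Fin n → B)) → ℝ) (hp : IsPMF p) =>
    factor_bounds hn (Qk n θ) (Pk n θ) (hQk n θ) (hPk n θ)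
      (factorPair_symm (hfac θ)) p hp
  have hassoc : (1 / (n : ℝ)) * ((D1 : ℝ) + (D2 : ℝ)) * Real.logb 2 (Fintype.card C)
      = (1 / (n : ℝ)) * (((D1 : ℝ) + (D2 : ℝ)) * Real.logb 2 (Fintype.card C)) :=
    mul_assoc _ _ _
  refine ⟨fun θ p hp =>
    ⟨(hbPQ θ p hp).1, (hbPQ θ p hp).2, (hbQP θ p hp).1, (hbQP θ p hp).2⟩, ?_, ?_⟩
  · rw [hassoc]
    exact region_subset_of_bounds Pk Qk hQk n _ hδ
      (fun θ p hp => ⟨(hbPQ θ p hp).1, (hbPQ θ p hp).2⟩)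
  · rw [hassoc]
    exact region_subset_of_bounds Qk Pk hPk n _ hδ
      (fun θ p hp => ⟨(hbQP θ p hp).1, (hbQP θ p hp).2⟩)


end ACMACPaper
end
end

section
/- For the synchronous cognitive MAC (CMAC, i.e., the ACMAC with D = {0}) defined by X1 = {2, 4}, X2 = Y = {0, 1, 2, 3}, and the deterministic channel Y = X2 mod X1, the capacity region is the triangle {(R1, R2) : R1, R2 ≥ 0, R1 + R2 ≤ 2} (rates in bits); moreover this region is also the capacity region of the ACMAC for this channel for every finite bounded delay set D. -/
open scoped BigOperators
open Real

noncomputable section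

namespace ACMACPaper

/-- The input alphabet `X1 = {2, 4}` of the example channel. -/
abbrev X1ex : Type := ↥({2, 4} : Finset ℕ)

instance : Inhabited X1ex := ⟨⟨2, by decide⟩⟩

/-- The deterministic output `y = x2 mod x1` of the example channel
(`x1 ∈ {2,4}`, `x2, y ∈ {0,1,2,3}`). -/
def outEx (x1 : X1ex) (x2 : Fin 4) : Fin 4 :=
  ⟨(x2 : ℕ) % (x1 : ℕ), lt_of_le_of_lt (Nat.mod_le _ _) x2.isLt⟩

/-- The example channel `Y = X2 mod X1` as a transition pmf. -/
def Wex (x1 : X1ex) (x2 : Fin 4) (y : Fin 4) : ℝ :=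
  if y = outEx x1 x2 then 1 else 0

end ACMACPaper

namespace ACMACPaper


/-! ### Auxiliary lemmas for the example channel -/

lemma outEx_val (x1 : X1ex) (x2 : Fin 4) : (outEx x1 x2 : ℕ) = (x2 : ℕ) % (x1 : ℕ) := rfl

lemma outEx_zero (x1 : X1ex) : outEx x1 0 = 0 := by
  apply Fin.ext
  rw [outEx_val]
  simp

lemma outEx_four (h : (4:ℕ) ∈ ({2,4} : Finset ℕ)) (x2 : Fin 4) :
    outEx ⟨4, h⟩ x2 = x2 := by
  apply Fin.ext
  rw [outEx_val]
  exact Nat.mod_eq_of_lt x2.isLt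

lemma extVec_fin {n : ℕ} {A : Type*} [Inhabited A] (x : Fin n → A) (i : Fin n) :
    extVec x (((i : ℕ) : ℤ) - 0) = x i := by
  have hi := i.isLt
  rw [extVec, dif_pos (by omega)]
  congr 1

/-- Achievability part: every pair with `R1+R2 < 2` is achievable with zero error,
for any delay set. -/
lemma achievable_of_sum_lt (dmin dmax : ℕ) (R : ℝ × ℝ) (h1 : 0 ≤ R.1) (h2 : 0 ≤ R.2)
    (hs : R.1 + R.2 < 2) : ACMACAchievable Wex dmin dmax R := by
  refine ⟨h1, h2, fun ε hε => ?_⟩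
  have hspos : (0:ℝ) < 2 - (R.1 + R.2) := by linarith
  obtain ⟨n0, hn0⟩ := exists_nat_ge ((2 * (dmin + dmax) + 2 : ℝ) / (2 - (R.1 + R.2)))
  set n : ℕ := n0 + (dmin + dmax) + 1 with hn_def
  have hnB : dmin + dmax < n := by omega
  have hnkey : (2 * (dmin + dmax) + 2 : ℝ) ≤ (n:ℝ) * (2 - (R.1 + R.2)) := by
    have h0 : (2 * (dmin + dmax) + 2 : ℝ) ≤ (n0:ℝ) * (2 - (R.1 + R.2)) := by
      rw [div_le_iff₀ hspos] at hn0
      exact hn0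
    have hn0n : (n0:ℝ) ≤ (n:ℝ) := by
      have : n0 ≤ n := by omega
      exact_mod_cast this
    calc (2 * (dmin + dmax) + 2 : ℝ) ≤ (n0:ℝ) * (2 - (R.1 + R.2)) := h0
    _ ≤ (n:ℝ) * (2 - (R.1 + R.2)) := mul_le_mul_of_nonneg_right hn0n hspos.le
  set a1 : ℕ := ⌈(n:ℝ) * R.1⌉₊ with ha1_def
  set a2 : ℕ := ⌈(n:ℝ) * R.2⌉₊ with ha2_def
  set K1 : ℕ := 2 ^ a1 with hK1_def
  set K2 : ℕ := 2 ^ a2 with hK2_def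
  set m : ℕ := n - (dmin + dmax) with hm_def
  have hbits : a1 + a2 ≤ 2 * m := by
    have hc1 : (a1 : ℝ) < (n:ℝ) * R.1 + 1 := Nat.ceil_lt_add_one (by positivity)
    have hc2 : (a2 : ℝ) < (n:ℝ) * R.2 + 1 := Nat.ceil_lt_add_one (by positivity)
    have hmcast : (m : ℝ) = (n:ℝ) - (dmin + dmax : ℕ) := by
      rw [hm_def]; push_cast [Nat.cast_sub (le_of_lt hnB)]; ring
    have hdd : ((dmin + dmax : ℕ):ℝ) = (dmin:ℝ) + (dmax:ℝ) := by push_cast; ring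
    have : (a1 : ℝ) + (a2 : ℝ) < 2 * (m:ℝ) := by
      rw [hmcast, hdd]; nlinarith [hnkey, hc1, hc2]
    exact_mod_cast this.le
  have hcard : K1 * K2 ≤ 4 ^ m := by
    calc K1 * K2 = 2 ^ (a1 + a2) := by rw [hK1_def, hK2_def, pow_add]
    _ ≤ 2 ^ (2 * m) := Nat.pow_le_pow_right (by norm_num) hbits
    _ = 4 ^ m := by rw [pow_mul]; norm_num
  -- the injective encoder into interior sequences
  set enc : Fin K1 × Fin K2 → (Fin m → Fin 4) :=
    fun p => finFunctionFinEquiv.symm (Fin.castLE hcard (finProdFinEquiv p)) with henc_def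
  have henc : Function.Injective enc := by
    intro p q hpq
    apply finProdFinEquiv.injective
    apply Fin.castLE_injective hcard
    exact finFunctionFinEquiv.symm.injective hpq
  set f1 : Fin K1 → Fin n → X1ex := fun _ _ => ⟨4, by decide⟩ with hf1_def
  set f2 : Fin K1 → Fin K2 → Fin n → Fin 4 :=
    fun m1 m2 i =>
      if h : dmax ≤ (i:ℕ) ∧ (i:ℕ) + dmin < n then
        enc (m1, m2) ⟨(i:ℕ) - dmax, by omega⟩
      else 0 with hf2_def
  set F : Fin K1 × Fin K2 → (Fin n → Fin 4) := fun p => f2 p.1 p.2 with hF_def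
  have hFpos : ∀ (p : Fin K1 × Fin K2) (j : Fin m),
      F p ⟨dmax + (j:ℕ), by omega⟩ = enc p j := by
    intro p j
    have hj := j.isLt
    have hcond : dmax ≤ dmax + (j:ℕ) ∧ dmax + (j:ℕ) + dmin < n := by omega
    show f2 p.1 p.2 _ = enc p j
    rw [hf2_def]
    simp only []
    rw [dif_pos hcond]
    congr 1
    apply Fin.ext
    simp
  have hFinj : Function.Injective F := by
    intro p q hpq
    apply henc
    funext j
    rw [← hFpos p j, ← hFpos q j, hpq]
  have hK1pos : 0 < K1 := Nat.pow_pos (by norm_num)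
  have hK2pos : 0 < K2 := Nat.pow_pos (by norm_num)
  haveI : Nonempty (Fin K1 × Fin K2) := ⟨(⟨0, hK1pos⟩, ⟨0, hK2pos⟩)⟩
  set g : (Fin n → Fin 4) → Fin K1 × Fin K2 := Function.invFun F with hg_def
  have hg : ∀ p, g (F p) = p := fun p => Function.leftInverse_invFun hFinj p
  -- the crucial channel identity: output equals x2 for every delay in the set
  have hout : ∀ (p : Fin K1 × Fin K2), ∀ d ∈ delaySet dmin dmax, ∀ i : Fin n,
      outEx (extVec (f1 p.1) (((i:ℕ):ℤ) - d)) (F p i) = F p i := by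
    intro p d hd i
    rw [delaySet, Finset.mem_Icc] at hd
    have hi := i.isLt
    by_cases h : dmax ≤ (i:ℕ) ∧ (i:ℕ) + dmin < n
    · have hin : 0 ≤ ((i:ℕ):ℤ) - d ∧ ((i:ℕ):ℤ) - d < (n:ℤ) := by omega
      rw [extVec, dif_pos hin]
      exact outEx_four _ _
    · have hzero : F p i = 0 := by
        show f2 p.1 p.2 i = 0
        rw [hf2_def]
        simp only []
        rw [dif_neg h]
      rw [hzero]
      exact outEx_zero _
  refine ⟨n, K1, K2, f1, f2, g, by omega, ?_, ?_, ?_⟩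
  · have : ((K1:ℕ):ℝ) = (2:ℝ) ^ ((a1:ℕ):ℝ) := by
      rw [hK1_def]; push_cast; rw [← Real.rpow_natCast 2 a1]
    rw [this]
    exact Real.rpow_le_rpow_of_exponent_le one_le_two (Nat.le_ceil _)
  · have : ((K2:ℕ):ℝ) = (2:ℝ) ^ ((a2:ℕ):ℝ) := by
      rw [hK2_def]; push_cast; rw [← Real.rpow_natCast 2 a2]
    rw [this]
    exact Real.rpow_le_rpow_of_exponent_le one_le_two (Nat.le_ceil _)
  · intro d hd
    have herr : avgErr Wex d f1 f2 g = 0 := by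
      rw [avgErr]
      rw [mul_eq_zero]
      right
      apply Finset.sum_eq_zero
      intro m1 _
      apply Finset.sum_eq_zero
      intro m2 _
      apply Finset.sum_eq_zero
      intro y _
      by_cases hgy : g y = (m1, m2)
      · rw [if_neg (by simp [hgy])]
      · rw [if_pos hgy]
        have hyne : y ≠ F (m1, m2) := by
          intro hcontra
          exact hgy (by rw [hcontra, hg])
        rw [Function.ne_iff] at hyne
        obtain ⟨i, hi⟩ := hyne
        rw [blockLaw]
        apply Finset.prod_eq_zero (Finset.mem_univ i)
        rw [Wex, if_neg]
        rw [hout (m1, m2) d hd i]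
        exact hi
    rw [herr]
    exact hε.le

/-- Converse part: any achievable pair satisfies `R1 + R2 ≤ 2`. -/
lemma sum_le_two_of_achievable (dmin dmax : ℕ) (R : ℝ × ℝ)
    (h : ACMACAchievable Wex dmin dmax R) : R.1 + R.2 ≤ 2 := by
  obtain ⟨h1, h2, hach⟩ := h
  refine le_of_forall_pos_le_add (fun δ hδ => ?_)
  have hpow : (2:ℝ) ^ (-δ) < 1 :=
    Real.rpow_lt_one_of_one_lt_of_neg one_lt_two (by linarith)
  have hpowpos : (0:ℝ) < (2:ℝ) ^ (-δ) := Real.rpow_pos_of_pos two_pos _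
  obtain ⟨n, K1, K2, f1, f2, g, hn, hK1, hK2, herr⟩ :=
    hach (1 - (2:ℝ) ^ (-δ)) (by linarith)
  have h0mem : (0:ℤ) ∈ delaySet dmin dmax := by
    rw [delaySet, Finset.mem_Icc]; omega
  have herr0 := herr 0 h0mem
  -- output sequence for message pair p under delay 0
  set Yhat : Fin K1 × Fin K2 → (Fin n → Fin 4) :=
    fun p i => outEx (f1 p.1 i) (f2 p.1 p.2 i) with hYhat_def
  have hblock : ∀ (p : Fin K1 × Fin K2) (y : Fin n → Fin 4),
      blockLaw Wex 0 (f1 p.1) (f2 p.1 p.2) y = if y = Yhat p then 1 else 0 := by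
    intro p y
    rw [blockLaw]
    by_cases hy : y = Yhat p
    · rw [if_pos hy]
      apply Finset.prod_eq_one
      intro i _
      rw [Wex, if_pos]
      rw [extVec_fin, hy]
    · rw [if_neg hy]
      have hy' : y ≠ Yhat p := hy
      rw [Function.ne_iff] at hy'
      obtain ⟨i, hi⟩ := hy'
      apply Finset.prod_eq_zero (Finset.mem_univ i)
      rw [Wex, if_neg]
      rw [extVec_fin]
      exact hi
  have hsum : ∀ p : Fin K1 × Fin K2,
      (∑ y : Fin n → Fin 4, if g y ≠ p then blockLaw Wex 0 (f1 p.1) (f2 p.1 p.2) y else 0)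
        = if g (Yhat p) = p then 0 else 1 := by
    intro p
    rw [Finset.sum_congr rfl (fun y _ => by rw [hblock p y])]
    rw [Finset.sum_eq_single (Yhat p)]
    · by_cases hgp : g (Yhat p) = p
      · rw [if_pos hgp, if_neg (by simp [hgp])]
      · rw [if_neg hgp, if_pos hgp, if_pos rfl]
    · intro y _ hy
      by_cases hc : g y ≠ p
      · rw [if_pos hc, if_neg hy]
      · rw [if_neg hc]
    · intro habs
      exact absurd (Finset.mem_univ _) habs
  -- rewrite the average error
  have hA : avgErr Wex 0 f1 f2 g
      = (1 / ((K1:ℝ) * (K2:ℝ))) *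
        ∑ p : Fin K1 × Fin K2, (if g (Yhat p) = p then (0:ℝ) else 1) := by
    rw [avgErr, Fintype.sum_prod_type]
    congr 1
    refine Finset.sum_congr rfl (fun m1 _ => Finset.sum_congr rfl (fun m2 _ => ?_))
    exact hsum (m1, m2)
  -- count correctly decoded pairs
  set S : Finset (Fin K1 × Fin K2) := Finset.univ.filter (fun p => g (Yhat p) = p)
    with hS_def
  have hmemS : ∀ p, p ∈ S ↔ g (Yhat p) = p := by
    intro p; rw [hS_def, Finset.mem_filter]; simp
  have hScard : S.card ≤ 4 ^ n := by
    have hinj : Set.InjOn Yhat (S : Set (Fin K1 × Fin K2)) := by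
      intro p hp q hq hpq
      have hp' := (hmemS p).mp (Finset.mem_coe.mp hp)
      have hq' := (hmemS q).mp (Finset.mem_coe.mp hq)
      rw [← hp', ← hq', hpq]
    calc S.card ≤ (Finset.univ : Finset (Fin n → Fin 4)).card :=
          Finset.card_le_card_of_injOn Yhat (fun p _ => Finset.mem_univ _) hinj
    _ = 4 ^ n := by rw [Finset.card_univ, Fintype.card_fun]; simp
  have hsum2 : (∑ p : Fin K1 × Fin K2, (if g (Yhat p) = p then (0:ℝ) else 1))
      = ((K1 : ℝ) * (K2 : ℝ)) - (S.card : ℝ) := by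
    have hpt : ∀ p : Fin K1 × Fin K2, (if g (Yhat p) = p then (0:ℝ) else 1)
        = 1 - (if g (Yhat p) = p then (1:ℝ) else 0) := by
      intro p; split_ifs <;> ring
    rw [Finset.sum_congr rfl (fun p _ => hpt p), Finset.sum_sub_distrib,
      Finset.sum_boole, Finset.sum_const, Finset.card_univ, Fintype.card_prod]
    rw [hS_def]
    simp only [Fintype.card_fin, nsmul_eq_mul, mul_one, Nat.cast_mul]
  have hK1posR : (0:ℝ) < (K1:ℝ) := lt_of_lt_of_le (Real.rpow_pos_of_pos two_pos _) hK1
  have hK2posR : (0:ℝ) < (K2:ℝ) := lt_of_lt_of_le (Real.rpow_pos_of_pos two_pos _) hK2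
  have hKKpos : (0:ℝ) < (K1:ℝ) * (K2:ℝ) := mul_pos hK1posR hK2posR
  -- from the error bound: (2^{-δ}) K1 K2 ≤ 4^n
  have hmain : (2:ℝ) ^ (-δ) * ((K1:ℝ) * (K2:ℝ)) ≤ (4:ℝ) ^ n := by
    rw [hA, hsum2] at herr0
    rw [div_mul_eq_mul_div, one_mul, div_le_iff₀ hKKpos] at herr0
    have hcard4 : (S.card : ℝ) ≤ (4:ℝ) ^ n := by
      calc (S.card : ℝ) ≤ ((4 ^ n : ℕ) : ℝ) := by exact_mod_cast hScard
      _ = (4:ℝ) ^ n := by push_cast; ring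
    nlinarith
  -- turn into an exponent inequality
  have hKbound : (2:ℝ) ^ ((n:ℝ) * R.1 + (n:ℝ) * R.2) ≤ (K1:ℝ) * (K2:ℝ) := by
    rw [Real.rpow_add two_pos]
    exact mul_le_mul hK1 hK2 (le_of_lt (Real.rpow_pos_of_pos two_pos _)) hK1posR.le
  have h4n : (4:ℝ) ^ n = (2:ℝ) ^ ((2 * n : ℕ) : ℝ) := by
    rw [Real.rpow_natCast, pow_mul]
    norm_num
  have hexp : -δ + ((n:ℝ) * R.1 + (n:ℝ) * R.2) ≤ ((2 * n : ℕ) : ℝ) := by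
    rw [← Real.rpow_le_rpow_left_iff (x := (2:ℝ)) one_lt_two, Real.rpow_add two_pos]
    calc (2:ℝ) ^ (-δ) * (2:ℝ) ^ ((n:ℝ) * R.1 + (n:ℝ) * R.2)
        ≤ (2:ℝ) ^ (-δ) * ((K1:ℝ) * (K2:ℝ)) :=
          mul_le_mul_of_nonneg_left hKbound hpowpos.le
    _ ≤ (4:ℝ) ^ n := hmain
    _ = (2:ℝ) ^ ((2 * n : ℕ) : ℝ) := h4n
  have hn1 : (1:ℝ) ≤ (n:ℝ) := by exact_mod_cast hn
  push_cast at hexp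
  rcases le_or_gt (R.1 + R.2) 2 with hc | hc
  · linarith
  · have := mul_le_mul_of_nonneg_right hn1 (le_of_lt (sub_pos.mpr hc))
    nlinarith

/-- The triangle is a closed set. -/
lemma triangle_isClosed :
    IsClosed {R : ℝ × ℝ | 0 ≤ R.1 ∧ 0 ≤ R.2 ∧ R.1 + R.2 ≤ 2} := by
  have e : {R : ℝ × ℝ | 0 ≤ R.1 ∧ 0 ≤ R.2 ∧ R.1 + R.2 ≤ 2}
      = {R : ℝ × ℝ | 0 ≤ R.1} ∩ ({R : ℝ × ℝ | 0 ≤ R.2} ∩ {R : ℝ × ℝ | R.1 + R.2 ≤ 2}) := by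
    ext R; simp [Set.mem_inter_iff, and_assoc]
  rw [e]
  exact (isClosed_le continuous_const continuous_fst).inter
    ((isClosed_le continuous_const continuous_snd).inter
      (isClosed_le (continuous_fst.add continuous_snd) continuous_const))

/-- The capacity region of the example ACMAC for every delay set. -/
lemma capacity_eq_triangle (dmin dmax : ℕ) :
    ACMACCapacity Wex dmin dmax = {R : ℝ × ℝ | 0 ≤ R.1 ∧ 0 ≤ R.2 ∧ R.1 + R.2 ≤ 2} := by
  apply Set.Subset.antisymm
  · refine closure_minimal ?_ triangle_isClosed
    intro R hR
    exact ⟨hR.1, hR.2.1, sum_le_two_of_achievable dmin dmax R hR⟩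
  · intro R hR
    obtain ⟨h1, h2, hsum⟩ := hR
    rw [ACMACCapacity, Metric.mem_closure_iff]
    intro ε hε
    set η : ℝ := min (1/2) (ε/4) with hη_def
    have hη1 : η ≤ 1/2 := min_le_left _ _
    have hη2 : η ≤ ε/4 := min_le_right _ _
    have hηpos : 0 < η := lt_min (by norm_num) (by linarith)
    set c : ℝ := 1 - η with hc_def
    have hc0 : 0 ≤ c := by rw [hc_def]; linarith
    have hc1 : c < 1 := by rw [hc_def]; linarith
    have hc' : 1 - c = η := by rw [hc_def]; ring
    have hR1le : R.1 ≤ 2 := by linarith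
    have hR2le : R.2 ≤ 2 := by linarith
    refine ⟨(c * R.1, c * R.2), ?_, ?_⟩
    · apply achievable_of_sum_lt
      · exact mul_nonneg hc0 h1
      · exact mul_nonneg hc0 h2
      · show c * R.1 + c * R.2 < 2
        nlinarith
    · rw [Prod.dist_eq]
      have hd1 : dist R.1 (c * R.1) < ε := by
        rw [Real.dist_eq, abs_of_nonneg (by nlinarith [mul_nonneg (sub_nonneg.mpr hc1.le) h1])]
        have he : R.1 - c * R.1 = (1 - c) * R.1 := by ring
        rw [he, hc']
        calc η * R.1 ≤ (ε/4) * 2 := mul_le_mul hη2 hR1le h1 (by linarith)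
        _ < ε := by linarith
      have hd2 : dist R.2 (c * R.2) < ε := by
        rw [Real.dist_eq, abs_of_nonneg (by nlinarith [mul_nonneg (sub_nonneg.mpr hc1.le) h2])]
        have he : R.2 - c * R.2 = (1 - c) * R.2 := by ring
        rw [he, hc']
        calc η * R.2 ≤ (ε/4) * 2 := mul_le_mul hη2 hR2le h2 (by linarith)
        _ < ε := by linarith
      exact max_lt hd1 hd2

/-- **Example (CMAC side).** For the channel `Y = X2 mod X1` with
`X1 = {2,4}`, `X2 = Y = {0,1,2,3}`, the capacity region of the synchronous
cognitive MAC (the ACMAC with `D = {0}`) is the triangle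
`{(R1,R2) : R1,R2 ≥ 0, R1+R2 ≤ 2}` (bits), and this is also the capacity
region of the ACMAC for every finite bounded delay set. -/
theorem example_cmac_capacity :
    ACMACCapacity Wex 0 0 = {R : ℝ × ℝ | 0 ≤ R.1 ∧ 0 ≤ R.2 ∧ R.1 + R.2 ≤ 2} ∧
    ∀ dmin dmax : ℕ,
      ACMACCapacity Wex dmin dmax
        = {R : ℝ × ℝ | 0 ≤ R.1 ∧ 0 ≤ R.2 ∧ R.1 + R.2 ≤ 2} :=
  ⟨capacity_eq_triangle 0 0, capacity_eq_triangle⟩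

end ACMACPaper
end
end

section
/- For the synchronous codeword-cognitive MAC (CC-MAC, i.e., the ACC-MAC with D = {0}) defined by X1 = {2, 4}, X2 = Y = {0, 1, 2, 3}, and the deterministic channel Y = X2 mod X1, the capacity region is the trapezoid {(R1, R2) : R1, R2 ≥ 0, R1 ≤ 1, R1 + R2 ≤ 2} (rates in bits); this region coincides with the capacity region of the same channel with no side-information at either transmitter, and it is also the capacity region of the ACC-MAC for this channel for every finite bounded delay set D. -/
open scoped BigOperators
open Real

noncomputable section

namespace ACMACPaper

variable {X1 X2 Y : Type*} [Fintype X1] [Fintype X2] [Fintype Y]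
  [Inhabited X1] [Inhabited X2]

/-- Achievability for the ACC-MAC: the informed encoder knows the *codeword*
of the uninformed user (its encoder is a map `X1^n × M2 → X2^n`), not its
message. -/
def ACCMACAchievable (W : X1 → X2 → Y → ℝ) (dmin dmax : ℕ) (R : ℝ × ℝ) : Prop :=
  0 ≤ R.1 ∧ 0 ≤ R.2 ∧
  ∀ ε : ℝ, 0 < ε → ∃ (n K1 K2 : ℕ) (f1 : Fin K1 → Fin n → X1)
    (f2 : (Fin n → X1) → Fin K2 → Fin n → X2) (g : (Fin n → Y) → Fin K1 × Fin K2),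
      0 < n ∧ (2 : ℝ) ^ ((n : ℝ) * R.1) ≤ (K1 : ℝ) ∧
      (2 : ℝ) ^ ((n : ℝ) * R.2) ≤ (K2 : ℝ) ∧
      ∀ d ∈ delaySet dmin dmax, avgErr W d f1 (fun m1 m2 => f2 (f1 m1) m2) g ≤ ε

/-- The capacity region of the ACC-MAC. -/
def ACCMACCapacity (W : X1 → X2 → Y → ℝ) (dmin dmax : ℕ) : Set (ℝ × ℝ) :=
  closure {R | ACCMACAchievable W dmin dmax R}

end ACMACPaper

namespace ACMACPaper

variable {X1 X2 Y : Type*} [Fintype X1] [Fintype X2] [Fintype Y]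
  [Inhabited X1] [Inhabited X2]

/-- Achievability for the non-cognitive (asynchronous) MAC: the second encoder
depends only on its own message. -/
def MACAchievable (W : X1 → X2 → Y → ℝ) (dmin dmax : ℕ) (R : ℝ × ℝ) : Prop :=
  0 ≤ R.1 ∧ 0 ≤ R.2 ∧
  ∀ ε : ℝ, 0 < ε → ∃ (n K1 K2 : ℕ) (f1 : Fin K1 → Fin n → X1)
    (f2 : Fin K2 → Fin n → X2) (g : (Fin n → Y) → Fin K1 × Fin K2),
      0 < n ∧ (2 : ℝ) ^ ((n : ℝ) * R.1) ≤ (K1 : ℝ) ∧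
      (2 : ℝ) ^ ((n : ℝ) * R.2) ≤ (K2 : ℝ) ∧
      ∀ d ∈ delaySet dmin dmax, avgErr W d f1 (fun _ m2 => f2 m2) g ≤ ε

/-- Capacity region of the non-cognitive MAC. -/
def MACCapacity (W : X1 → X2 → Y → ℝ) (dmin dmax : ℕ) : Set (ℝ × ℝ) :=
  closure {R | MACAchievable W dmin dmax R}

end ACMACPaper

namespace ACMACPaper

def x1two : X1ex := ⟨2, by decide⟩
def x1four : X1ex := ⟨4, by decide⟩

lemma X1ex_cases (x : X1ex) : x = x1two ∨ x = x1four := by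
  rcases x with ⟨v, hv⟩
  fin_cases hv <;> simp [x1two, x1four]

lemma default_X1ex : (default : X1ex) = x1two := rfl

/-- The deterministic output word of the example channel with delay `d`. -/
def Yout (d : ℤ) {n : ℕ} (x1 : Fin n → X1ex) (x2 : Fin n → Fin 4) : Fin n → Fin 4 :=
  fun i => outEx (extVec x1 (((i : ℕ) : ℤ) - d)) (x2 i)

lemma blockLaw_Wex (d : ℤ) {n : ℕ} (x1 : Fin n → X1ex) (x2 : Fin n → Fin 4)
    (y : Fin n → Fin 4) :
    blockLaw Wex d x1 x2 y = if y = Yout d x1 x2 then 1 else 0 := by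
  unfold blockLaw Wex
  by_cases h : y = Yout d x1 x2
  · subst h
    simp [Yout]
  · rw [if_neg h]
    have : ∃ i : Fin n, y i ≠ Yout d x1 x2 i := by
      by_contra hc
      push_neg at hc
      exact h (funext hc)
    obtain ⟨i, hi⟩ := this
    exact Finset.prod_eq_zero (Finset.mem_univ i) (by simp [Yout] at hi ⊢; exact hi)

lemma avgErr_det (d : ℤ) {n K1 K2 : ℕ} (f1 : Fin K1 → Fin n → X1ex)
    (F2 : Fin K1 → Fin K2 → Fin n → Fin 4) (g : (Fin n → Fin 4) → Fin K1 × Fin K2) :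
    avgErr Wex d f1 F2 g = (1 / ((K1 : ℝ) * (K2 : ℝ))) *
      ∑ m1 : Fin K1, ∑ m2 : Fin K2,
        (if g (Yout d (f1 m1) (F2 m1 m2)) ≠ (m1, m2) then (1 : ℝ) else 0) := by
  unfold avgErr
  congr 1
  refine Finset.sum_congr rfl fun m1 _ => Finset.sum_congr rfl fun m2 _ => ?_
  have : ∀ y : Fin n → Fin 4,
      (if g y ≠ (m1, m2) then blockLaw Wex d (f1 m1) (F2 m1 m2) y else 0)
        = (if y = Yout d (f1 m1) (F2 m1 m2) then
            (if g y ≠ (m1, m2) then (1 : ℝ) else 0) else 0) := by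
    intro y
    rw [blockLaw_Wex]
    by_cases h1 : y = Yout d (f1 m1) (F2 m1 m2) <;> by_cases h2 : g y ≠ (m1, m2) <;>
      simp [h1, h2]
  rw [Finset.sum_congr rfl fun y _ => this y, Finset.sum_ite_eq' Finset.univ]
  simp

lemma avgErr_zero_of_correct (d : ℤ) {n K1 K2 : ℕ} (f1 : Fin K1 → Fin n → X1ex)
    (F2 : Fin K1 → Fin K2 → Fin n → Fin 4) (g : (Fin n → Fin 4) → Fin K1 × Fin K2)
    (h : ∀ m1 m2, g (Yout d (f1 m1) (F2 m1 m2)) = (m1, m2)) :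
    avgErr Wex d f1 F2 g = 0 := by
  rw [avgErr_det]
  have : ∀ m1 : Fin K1, ∀ m2 : Fin K2,
      (if g (Yout d (f1 m1) (F2 m1 m2)) ≠ (m1, m2) then (1 : ℝ) else 0) = 0 := by
    intro m1 m2; simp [h m1 m2]
  simp only [this, Finset.sum_const_zero, mul_zero]

end ACMACPaper

namespace ACMACPaper

lemma card_X1ex : Fintype.card X1ex = 2 := by
  rw [Fintype.card_coe]; decide

lemma counting_converse {n K1 K2 : ℕ} (hK1 : 1 ≤ K1) (hK2 : 1 ≤ K2)
    (f1 : Fin K1 → Fin n → X1ex)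
    (f2 : (Fin n → X1ex) → Fin K2 → Fin n → Fin 4)
    (g : (Fin n → Fin 4) → Fin K1 × Fin K2) {ε : ℝ}
    (h : avgErr Wex 0 f1 (fun m1 m2 => f2 (f1 m1) m2) g ≤ ε) :
    (1 - ε) * (K1 : ℝ) ≤ (2 : ℝ) ^ n ∧
    (1 - ε) * ((K1 : ℝ) * (K2 : ℝ)) ≤ (4 : ℝ) ^ n := by
  classical
  set Y : Fin K1 × Fin K2 → (Fin n → Fin 4) :=
    fun p => Yout 0 (f1 p.1) (f2 (f1 p.1) p.2) with hY
  set C : Finset (Fin K1 × Fin K2) := Finset.univ.filter (fun p => g (Y p) = p) with hC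
  set B : Finset (Fin K1 × Fin K2) := Finset.univ.filter (fun p => ¬ g (Y p) = p) with hB
  have hKK : (0 : ℝ) < (K1 : ℝ) * (K2 : ℝ) := by
    have h1 : (0:ℝ) < K1 := by exact_mod_cast hK1
    have h2 : (0:ℝ) < K2 := by exact_mod_cast hK2
    positivity
  have hcards : C.card + B.card = K1 * K2 := by
    rw [hC, hB, Finset.card_filter_add_card_filter_not]
    simp
  -- avgErr equals B.card / (K1*K2)
  have herr : avgErr Wex 0 f1 (fun m1 m2 => f2 (f1 m1) m2) g
      = (1 / ((K1 : ℝ) * (K2 : ℝ))) * (B.card : ℝ) := by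
    rw [avgErr_det]
    congr 1
    calc ∑ m1 : Fin K1, ∑ m2 : Fin K2,
          (if g (Yout 0 (f1 m1) (f2 (f1 m1) m2)) ≠ (m1, m2) then (1 : ℝ) else 0)
        = ∑ p : Fin K1 × Fin K2, (if ¬ g (Y p) = p then (1 : ℝ) else 0) := by
          rw [Fintype.sum_prod_type]
      _ = (B.card : ℝ) := by rw [Finset.sum_boole, hB]
  have hBle : (B.card : ℝ) ≤ ε * ((K1 : ℝ) * (K2 : ℝ)) := by
    rw [herr, div_mul_eq_mul_div, one_mul, div_le_iff₀ hKK] at h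
    linarith [h]
  have hClb : (1 - ε) * ((K1 : ℝ) * (K2 : ℝ)) ≤ (C.card : ℝ) := by
    have : (C.card : ℝ) + (B.card : ℝ) = (K1 : ℝ) * (K2 : ℝ) := by
      exact_mod_cast hcards
    nlinarith [this, hBle]
  -- injectivity of Y on C
  have hcorrect : ∀ p ∈ C, g (Y p) = p := by
    intro p hp; rw [hC, Finset.mem_filter] at hp; exact hp.2
  have hYinj : Set.InjOn Y C := by
    intro p hp q hq hpq
    have := hcorrect p hp
    rw [hpq, hcorrect q hq] at this
    exact this.symm
  -- bound 1 : C.card ≤ 4^n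
  have hC4 : C.card ≤ 4 ^ n := by
    have := Finset.card_le_card_of_injOn Y (fun p _ => Finset.mem_univ (Y p)) hYinj
    calc C.card ≤ (Finset.univ : Finset (Fin n → Fin 4)).card := this
      _ = 4 ^ n := by simp [Finset.card_univ, Fintype.card_fun]
  -- bound 2 : C.card ≤ 2^n * K2
  have hC2 : C.card ≤ 2 ^ n * K2 := by
    set φ : Fin K1 × Fin K2 → (Fin n → X1ex) × Fin K2 := fun p => (f1 p.1, p.2) with hφ
    have hφinj : Set.InjOn φ C := by
      intro p hp q hq hpq
      have h1 : f1 p.1 = f1 q.1 := (Prod.ext_iff.mp hpq).1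
      have h2 : p.2 = q.2 := (Prod.ext_iff.mp hpq).2
      have hYeq : Y p = Y q := by
        rw [hY]; simp only; rw [h1, h2]
      exact hYinj hp hq hYeq
    have := Finset.card_le_card_of_injOn φ (fun p _ => Finset.mem_univ (φ p)) hφinj
    calc C.card ≤ (Finset.univ : Finset ((Fin n → X1ex) × Fin K2)).card := this
      _ = 2 ^ n * K2 := by
          simp [Finset.card_univ, Fintype.card_prod, Fintype.card_fun, card_X1ex]
  constructor
  · have hC2' : (C.card : ℝ) ≤ (2 : ℝ) ^ n * (K2 : ℝ) := by exact_mod_cast hC2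
    have hK2pos : (0:ℝ) < (K2 : ℝ) := by exact_mod_cast hK2
    have : ((1 - ε) * (K1 : ℝ)) * (K2 : ℝ) ≤ ((2 : ℝ) ^ n) * (K2 : ℝ) := by
      calc ((1 - ε) * (K1 : ℝ)) * (K2 : ℝ) = (1 - ε) * ((K1 : ℝ) * (K2 : ℝ)) := by ring
        _ ≤ (C.card : ℝ) := hClb
        _ ≤ _ := hC2'
    exact le_of_mul_le_mul_right this hK2pos
  · have hC4' : (C.card : ℝ) ≤ (4 : ℝ) ^ n := by exact_mod_cast hC4
    linarith [hClb]

end ACMACPaper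

namespace ACMACPaper

/-! ### The explicit zero-error code -/

/-- Block length of the explicit code. -/
def na (dmin dmax k m : ℕ) : ℕ := k + m + 2 * (dmin + dmax) + 2

/-- Start of the "free" region for user 2. -/
def sa (dmin dmax k : ℕ) : ℕ := dmin + dmax + 2 + k + dmax

lemma na_eq (dmin dmax k m : ℕ) : na dmin dmax k m = sa dmin dmax k + m + dmin := by
  unfold na sa; ring

/-- Symbol sent by user 1 at (absolute) time `j`. -/
def enc1v (dmin dmax k : ℕ) (u : Fin k → Fin 2) (j : ℕ) : X1ex :=
  if _h1 : j < dmin + dmax + 1 then x1four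
  else if _h2 : j = dmin + dmax + 1 then x1two
  else if h3 : j < dmin + dmax + 2 + k then
    (if u ⟨j - (dmin + dmax + 2), by omega⟩ = 0 then x1two else x1four)
  else x1four

/-- Codeword of user 1. -/
def enc1 (dmin dmax k m : ℕ) (u : Fin k → Fin 2) : Fin (na dmin dmax k m) → X1ex :=
  fun i => enc1v dmin dmax k u (i : ℕ)

lemma enc1v_marker4 (dmin dmax k : ℕ) (u : Fin k → Fin 2) (j : ℕ)
    (hj : j ≤ dmin + dmax) : enc1v dmin dmax k u j = x1four := by
  unfold enc1v; rw [dif_pos (by omega)]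

lemma enc1v_marker2 (dmin dmax k : ℕ) (u : Fin k → Fin 2) :
    enc1v dmin dmax k u (dmin + dmax + 1) = x1two := by
  unfold enc1v; rw [dif_neg (by omega), dif_pos rfl]

lemma enc1v_data (dmin dmax k : ℕ) (u : Fin k → Fin 2) (j : ℕ) (hj : j < k) :
    enc1v dmin dmax k u (dmin + dmax + 2 + j)
      = (if u ⟨j, hj⟩ = 0 then x1two else x1four) := by
  have he : dmin + dmax + 2 + j - (dmin + dmax + 2) = j := by omega
  unfold enc1v
  rw [dif_neg (by omega), dif_neg (by omega), dif_pos (by omega)]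
  simp only [he]
lemma enc1v_tail (dmin dmax k : ℕ) (u : Fin k → Fin 2) (j : ℕ)
    (hj : dmin + dmax + 2 + k ≤ j) : enc1v dmin dmax k u j = x1four := by
  unfold enc1v
  rw [dif_neg (by omega), dif_neg (by omega), dif_neg (by omega)]

/-- A quaternary symbol from two bits. -/
def mk4 (hi lo : Fin 2) : Fin 4 :=
  ⟨2 * (hi : ℕ) + (lo : ℕ), by have := hi.isLt; have := lo.isLt; omega⟩

/-- Codeword of user 2 (does not depend on user 1's codeword). -/
def enc2 (dmin dmax k m : ℕ) (c : Fin (na dmin dmax k m + m) → Fin 2) :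
    Fin (na dmin dmax k m) → Fin 4 :=
  fun i =>
    mk4
      (if h : sa dmin dmax k ≤ (i : ℕ) ∧ (i : ℕ) < sa dmin dmax k + m then
        c ⟨na dmin dmax k m + ((i : ℕ) - sa dmin dmax k), by omega⟩ else 1)
      (c ⟨(i : ℕ), by have := i.isLt; omega⟩)

lemma extVec_in {n : ℕ} {A : Type*} [Inhabited A] (x : Fin n → A) (j : ℤ)
    (h0 : 0 ≤ j) (h1 : j < (n : ℤ)) : extVec x j = x ⟨j.toNat, by omega⟩ :=
  dif_pos ⟨h0, h1⟩

lemma extVec_out {n : ℕ} {A : Type*} [Inhabited A] (x : Fin n → A) (j : ℤ)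
    (h : ¬ (0 ≤ j ∧ j < (n : ℤ))) : extVec x j = default :=
  dif_neg h

lemma x1two_ne_x1four : x1two ≠ x1four := by decide

lemma fin2_cases (a : Fin 2) : a = 0 ∨ a = 1 := by
  rcases a with ⟨v, hv⟩; interval_cases v <;> simp

end ACMACPaper

namespace ACMACPaper

lemma mk4_val (hi lo : Fin 2) : (mk4 hi lo : ℕ) = 2 * (hi : ℕ) + (lo : ℕ) := rfl

lemma x1two_val : ((x1two : X1ex) : ℕ) = 2 := rfl
lemma x1four_val : ((x1four : X1ex) : ℕ) = 4 := rfl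

lemma fin2_val_one : ((1 : Fin 2) : ℕ) = 1 := rfl

lemma outEx_mod2 (x1 : X1ex) (hi lo : Fin 2) :
    (outEx x1 (mk4 hi lo) : ℕ) % 2 = (lo : ℕ) := by
  have h1 := hi.isLt
  have h2 := lo.isLt
  rcases X1ex_cases x1 with h | h <;> subst h <;>
    rw [outEx_val, mk4_val] <;> [rw [x1two_val]; rw [x1four_val]] <;> omega

lemma outEx_four_s18 (hi lo : Fin 2) :
    (outEx x1four (mk4 hi lo) : ℕ) = 2 * (hi : ℕ) + (lo : ℕ) := by
  have h1 := hi.isLt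
  have h2 := lo.isLt
  rw [outEx_val, mk4_val, x1four_val]
  omega

lemma outEx_ind (x1 : X1ex) (lo : Fin 2) :
    (2 ≤ (outEx x1 (mk4 1 lo) : ℕ)) ↔ x1 = x1four := by
  have h2 := lo.isLt
  rcases X1ex_cases x1 with h | h <;> subst h
  · apply iff_of_false
    · rw [outEx_val, mk4_val, x1two_val, fin2_val_one]; omega
    · exact x1two_ne_x1four
  · apply iff_of_true
    · rw [outEx_val, mk4_val, x1four_val, fin2_val_one]; omega
    · rfl

lemma Yout_eq (d : ℤ) {n : ℕ} (x1 : Fin n → X1ex) (x2 : Fin n → Fin 4) (i : Fin n) :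
    Yout d x1 x2 i = outEx (extVec x1 (((i : ℕ) : ℤ) - d)) (x2 i) := rfl

lemma enc2_eq (dmin dmax k m : ℕ) (c : Fin (na dmin dmax k m + m) → Fin 2)
    (i : Fin (na dmin dmax k m)) :
    enc2 dmin dmax k m c i
      = mk4 (if h : sa dmin dmax k ≤ (i : ℕ) ∧ (i : ℕ) < sa dmin dmax k + m then
          c ⟨na dmin dmax k m + ((i : ℕ) - sa dmin dmax k), by omega⟩ else 1)
          (c ⟨(i : ℕ), by have := i.isLt; omega⟩) := rfl

section Analysis

variable (dmin dmax k m : ℕ) (d : ℤ) (u : Fin k → Fin 2)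
  (c : Fin (na dmin dmax k m + m) → Fin 2)

/-- The low bits of user 2 are always received unharmed. -/
lemma lo_rec (t : Fin (na dmin dmax k m + m)) (ht : (t : ℕ) < na dmin dmax k m) :
    ((Yout d (enc1 dmin dmax k m u) (enc2 dmin dmax k m c)) ⟨(t : ℕ), ht⟩ : ℕ) % 2
      = (c t : ℕ) := by
  rw [Yout_eq, enc2_eq, outEx_mod2]

/-- On the free region, both bits of user 2 are received unharmed. -/
lemma hi_rec (hd1 : -(dmin : ℤ) ≤ d) (hd2 : d ≤ (dmax : ℤ)) (r : ℕ) (hr : r < m) :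
    ((Yout d (enc1 dmin dmax k m u) (enc2 dmin dmax k m c))
        ⟨sa dmin dmax k + r, by have := na_eq dmin dmax k m; omega⟩ : ℕ)
      = 2 * (c ⟨na dmin dmax k m + r, by omega⟩ : ℕ)
          + (c ⟨sa dmin dmax k + r, by have := na_eq dmin dmax k m; omega⟩ : ℕ) := by
  have hna := na_eq dmin dmax k m
  rw [Yout_eq, enc2_eq]
  simp only [Fin.val_mk]
  -- the delayed symbol of user 1 equals 4
  have hw : extVec (enc1 dmin dmax k m u)
      (((sa dmin dmax k + r : ℕ) : ℤ) - d) = x1four := by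
    have h0 : 0 ≤ ((sa dmin dmax k + r : ℕ) : ℤ) - d := by
      unfold sa; push_cast; omega
    have h1 : ((sa dmin dmax k + r : ℕ) : ℤ) - d < (na dmin dmax k m : ℤ) := by
      unfold na sa at *; push_cast; omega
    rw [extVec_in _ _ h0 h1]
    show enc1v dmin dmax k u ((((sa dmin dmax k + r : ℕ) : ℤ) - d).toNat) = x1four
    apply enc1v_tail
    have : (dmin + dmax + 2 + k : ℤ) ≤ ((sa dmin dmax k + r : ℕ) : ℤ) - d := by
      unfold sa; push_cast; omega
    omega
  rw [hw, dif_pos (by constructor <;> omega), outEx_four_s18]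
  have e1 : (⟨na dmin dmax k m + (sa dmin dmax k + r - sa dmin dmax k), by omega⟩ :
      Fin (na dmin dmax k m + m)) = ⟨na dmin dmax k m + r, by omega⟩ := by
    simp only [Fin.mk.injEq]; omega
  rw [e1]

/-- Before position `sa`, the received symbol indicates the delayed symbol of
user 1. -/
lemma ind_rec (i : Fin (na dmin dmax k m)) (hi : (i : ℕ) < sa dmin dmax k) :
    (2 ≤ ((Yout d (enc1 dmin dmax k m u) (enc2 dmin dmax k m c)) i : ℕ)
      ↔ extVec (enc1 dmin dmax k m u) (((i : ℕ) : ℤ) - d) = x1four) := by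
  rw [Yout_eq, enc2_eq, dif_neg (by omega), outEx_ind]

end Analysis

end ACMACPaper


namespace ACMACPaper

section Inj

variable (dmin dmax k m : ℕ)

lemma lo_rec' (d : ℤ) (u : Fin k → Fin 2) (c : Fin (na dmin dmax k m + m) → Fin 2)
    (i : Fin (na dmin dmax k m)) (t : Fin (na dmin dmax k m + m))
    (hit : (i : ℕ) = (t : ℕ)) :
    ((Yout d (enc1 dmin dmax k m u) (enc2 dmin dmax k m c)) i : ℕ) % 2 = (c t : ℕ) := by
  obtain ⟨iv, hiv⟩ := i
  simp only at hit
  subst hit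
  exact lo_rec dmin dmax k m d u c t hiv

lemma hi_rec' (d : ℤ) (u : Fin k → Fin 2) (c : Fin (na dmin dmax k m + m) → Fin 2)
    (hd1 : -(dmin : ℤ) ≤ d) (hd2 : d ≤ (dmax : ℤ)) (r : ℕ) (hr : r < m)
    (i : Fin (na dmin dmax k m)) (hit : (i : ℕ) = sa dmin dmax k + r) :
    ((Yout d (enc1 dmin dmax k m u) (enc2 dmin dmax k m c)) i : ℕ)
      = 2 * (c ⟨na dmin dmax k m + r, by omega⟩ : ℕ)
          + (c ⟨sa dmin dmax k + r, by have := na_eq dmin dmax k m; omega⟩ : ℕ) := by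
  obtain ⟨iv, hiv⟩ := i
  simp only at hit
  subst hit
  exact hi_rec dmin dmax k m d u c hd1 hd2 r hr

/-- Two different delays are always distinguishable: the sync marker. -/
lemma window_ne (d d' : ℤ) (hd1 : -(dmin : ℤ) ≤ d) (hd2 : d ≤ (dmax : ℤ))
    (hd1' : -(dmin : ℤ) ≤ d') (hd2' : d' ≤ (dmax : ℤ)) (hlt : d < d')
    (u u' : Fin k → Fin 2)
    (hw : ∀ i : Fin (na dmin dmax k m), (i : ℕ) < sa dmin dmax k →
      (extVec (enc1 dmin dmax k m u) (((i : ℕ) : ℤ) - d) = x1four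
        ↔ extVec (enc1 dmin dmax k m u') (((i : ℕ) : ℤ) - d') = x1four)) : False := by
  have hna : na dmin dmax k m = k + m + 2 * (dmin + dmax) + 2 := rfl
  have hsa : sa dmin dmax k = dmin + dmax + 2 + k + dmax := rfl
  set i0 : ℕ := (d + (dmin : ℤ) + (dmax : ℤ) + 1).toNat with hi0
  have hi0v : (i0 : ℤ) = d + dmin + dmax + 1 := by omega
  have hi0na : i0 < na dmin dmax k m := by omega
  have hi0sa : i0 < sa dmin dmax k := by omega
  have hbw := hw ⟨i0, hi0na⟩ hi0sa
  simp only [Fin.val_mk] at hbw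
  have hL : extVec (enc1 dmin dmax k m u) ((i0 : ℤ) - d) = x1two := by
    rw [extVec_in _ _ (by omega) (by omega)]
    show enc1v dmin dmax k u (((i0 : ℤ) - d).toNat) = x1two
    have harg : ((i0 : ℤ) - d).toNat = dmin + dmax + 1 := by omega
    rw [harg]
    exact enc1v_marker2 dmin dmax k u
  have hR : extVec (enc1 dmin dmax k m u') ((i0 : ℤ) - d') = x1four := by
    rw [extVec_in _ _ (by omega) (by omega)]
    show enc1v dmin dmax k u' (((i0 : ℤ) - d').toNat) = x1four
    apply enc1v_marker4
    omega
  rw [hL, hR] at hbw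
  exact x1two_ne_x1four (hbw.mpr rfl)

/-- Joint injectivity of the code across all admissible delays. -/
theorem code_inj (d d' : ℤ) (hd1 : -(dmin : ℤ) ≤ d) (hd2 : d ≤ (dmax : ℤ))
    (hd1' : -(dmin : ℤ) ≤ d') (hd2' : d' ≤ (dmax : ℤ))
    (u u' : Fin k → Fin 2) (c c' : Fin (na dmin dmax k m + m) → Fin 2)
    (h : Yout d (enc1 dmin dmax k m u) (enc2 dmin dmax k m c)
        = Yout d' (enc1 dmin dmax k m u') (enc2 dmin dmax k m c')) :
    u = u' ∧ c = c' := by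
  have hna : na dmin dmax k m = k + m + 2 * (dmin + dmax) + 2 := rfl
  have hsa : sa dmin dmax k = dmin + dmax + 2 + k + dmax := rfl
  have hw : ∀ i : Fin (na dmin dmax k m), (i : ℕ) < sa dmin dmax k →
      (extVec (enc1 dmin dmax k m u) (((i : ℕ) : ℤ) - d) = x1four
        ↔ extVec (enc1 dmin dmax k m u') (((i : ℕ) : ℤ) - d') = x1four) := by
    intro i hi
    rw [← ind_rec dmin dmax k m d u c i hi, ← ind_rec dmin dmax k m d' u' c' i hi, h]
  have hdd : d = d' := by
    rcases lt_trichotomy d d' with hlt | heq | hlt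
    · exact ((window_ne dmin dmax k m d d' hd1 hd2 hd1' hd2' hlt u u' hw).elim)
    · exact heq
    · exact ((window_ne dmin dmax k m d' d hd1' hd2' hd1 hd2 hlt u' u
        (fun i hi => (hw i hi).symm)).elim)
  subst hdd
  constructor
  · -- recover user 1's data bits
    funext j
    set i1 : ℕ := ((dmin : ℤ) + dmax + 2 + (j : ℕ) + d).toNat with hi1
    have hj := j.isLt
    have hi1v : (i1 : ℤ) = (dmin : ℤ) + dmax + 2 + (j : ℕ) + d := by omega
    have hi1na : i1 < na dmin dmax k m := by omega
    have hi1sa : i1 < sa dmin dmax k := by omega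
    have hbw := hw ⟨i1, hi1na⟩ hi1sa
    simp only [Fin.val_mk] at hbw
    have harg : ((i1 : ℤ) - d).toNat = dmin + dmax + 2 + (j : ℕ) := by omega
    have hLw : extVec (enc1 dmin dmax k m u) ((i1 : ℤ) - d)
        = (if u j = 0 then x1two else x1four) := by
      rw [extVec_in _ _ (by omega) (by omega)]
      show enc1v dmin dmax k u (((i1 : ℤ) - d).toNat) = _
      rw [harg, enc1v_data dmin dmax k u (j : ℕ) hj]
    have hRw : extVec (enc1 dmin dmax k m u') ((i1 : ℤ) - d)
        = (if u' j = 0 then x1two else x1four) := by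
      rw [extVec_in _ _ (by omega) (by omega)]
      show enc1v dmin dmax k u' (((i1 : ℤ) - d).toNat) = _
      rw [harg, enc1v_data dmin dmax k u' (j : ℕ) hj]
    rw [hLw, hRw] at hbw
    rcases fin2_cases (u j) with h1 | h1 <;> rcases fin2_cases (u' j) with h2 | h2
    · rw [h1, h2]
    · exfalso; rw [h1, h2] at hbw
      rw [if_pos rfl, if_neg (by decide : (1 : Fin 2) ≠ 0)] at hbw
      exact x1two_ne_x1four (hbw.mpr rfl)
    · exfalso; rw [h1, h2] at hbw
      rw [if_pos rfl, if_neg (by decide : (1 : Fin 2) ≠ 0)] at hbw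
      exact x1two_ne_x1four (hbw.mp rfl)
    · rw [h1, h2]
  · -- recover user 2's data bits
    funext t
    have htlt := t.isLt
    by_cases htn : (t : ℕ) < na dmin dmax k m
    · have h1 := lo_rec' dmin dmax k m d u c ⟨(t : ℕ), htn⟩ t rfl
      have h2 := lo_rec' dmin dmax k m d u' c' ⟨(t : ℕ), htn⟩ t rfl
      rw [h] at h1
      exact Fin.val_injective (h1.symm.trans h2)
    · have hnaeq := na_eq dmin dmax k m
      set r : ℕ := (t : ℕ) - na dmin dmax k m with hrdef
      have hr : r < m := by omega
      have hisa : sa dmin dmax k + r < na dmin dmax k m := by omega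
      have h1 := hi_rec' dmin dmax k m d u c hd1 hd2 r hr ⟨sa dmin dmax k + r, hisa⟩ rfl
      have h2 := hi_rec' dmin dmax k m d u' c' hd1 hd2 r hr ⟨sa dmin dmax k + r, hisa⟩ rfl
      rw [h] at h1
      -- low bits at position sa+r agree
      have hlosa : sa dmin dmax k + r < na dmin dmax k m + m := by omega
      have h3 := lo_rec' dmin dmax k m d u c ⟨sa dmin dmax k + r, hisa⟩
        ⟨sa dmin dmax k + r, hlosa⟩ rfl
      have h4 := lo_rec' dmin dmax k m d u' c' ⟨sa dmin dmax k + r, hisa⟩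
        ⟨sa dmin dmax k + r, hlosa⟩ rfl
      rw [h] at h3
      have hteq : (⟨na dmin dmax k m + r, by omega⟩ : Fin (na dmin dmax k m + m)) = t := by
        apply Fin.ext
        simp only [Fin.val_mk]
        omega
      rw [← hteq]
      apply Fin.val_injective
      have b1 := (c ⟨na dmin dmax k m + r, by omega⟩).isLt
      have b2 := (c' ⟨na dmin dmax k m + r, by omega⟩).isLt
      omega

end Inj

end ACMACPaper

namespace ACMACPaper

/-- A zero-error decoder for the explicit code. -/
lemma exists_decoder (dmin dmax k m : ℕ) :
    ∃ g : (Fin (na dmin dmax k m) → Fin 4) →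
        (Fin k → Fin 2) × (Fin (na dmin dmax k m + m) → Fin 2),
      ∀ d ∈ delaySet dmin dmax, ∀ u c,
        g (Yout d (enc1 dmin dmax k m u) (enc2 dmin dmax k m c)) = (u, c) := by
  classical
  set D := delaySet dmin dmax with hD
  refine ⟨fun y =>
    if h : ∃ p : (Fin k → Fin 2) × (Fin (na dmin dmax k m + m) → Fin 2),
        ∃ d ∈ D, Yout d (enc1 dmin dmax k m p.1) (enc2 dmin dmax k m p.2) = y
      then h.choose else ⟨fun _ => 0, fun _ => 0⟩, ?_⟩
  intro d hd u c
  have hex : ∃ p : (Fin k → Fin 2) × (Fin (na dmin dmax k m + m) → Fin 2),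
      ∃ d' ∈ D, Yout d' (enc1 dmin dmax k m p.1) (enc2 dmin dmax k m p.2)
        = Yout d (enc1 dmin dmax k m u) (enc2 dmin dmax k m c) :=
    ⟨(u, c), d, hd, rfl⟩
  dsimp only
  rw [dif_pos hex]
  obtain ⟨d', hd', heq⟩ := hex.choose_spec
  rw [hD, delaySet, Finset.mem_Icc] at hd hd'
  have := code_inj dmin dmax k m d' d hd'.1 hd'.2 hd.1 hd.2 _ _ _ _ heq
  exact Prod.ext this.1 this.2

/-- Every rate pair dominated by the explicit code's rates is achievable,
even without any side information. -/
lemma ach_point (dmin dmax k m : ℕ) (R1 R2 : ℝ) (h10 : 0 ≤ R1) (h20 : 0 ≤ R2)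
    (h1 : (na dmin dmax k m : ℝ) * R1 ≤ (k : ℝ))
    (h2 : (na dmin dmax k m : ℝ) * R2 ≤ ((na dmin dmax k m + m : ℕ) : ℝ)) :
    MACAchievable Wex dmin dmax (R1, R2) := by
  classical
  obtain ⟨g, hg⟩ := exists_decoder dmin dmax k m
  refine ⟨h10, h20, fun ε hε => ?_⟩
  set e1 : (Fin k → Fin 2) ≃ Fin (2 ^ k) := finFunctionFinEquiv
  set e2 : (Fin (na dmin dmax k m + m) → Fin 2) ≃ Fin (2 ^ (na dmin dmax k m + m)) :=
    finFunctionFinEquiv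
  refine ⟨na dmin dmax k m, 2 ^ k, 2 ^ (na dmin dmax k m + m),
    fun m1 => enc1 dmin dmax k m (e1.symm m1),
    fun m2 => enc2 dmin dmax k m (e2.symm m2),
    fun y => ((e1 (g y).1), (e2 (g y).2)), ?_, ?_, ?_, ?_⟩
  · show 0 < na dmin dmax k m
    have : na dmin dmax k m = k + m + 2 * (dmin + dmax) + 2 := rfl
    omega
  · calc (2 : ℝ) ^ ((na dmin dmax k m : ℝ) * R1) ≤ (2 : ℝ) ^ ((k : ℕ) : ℝ) :=
        Real.rpow_le_rpow_of_exponent_le one_le_two h1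
      _ = ((2 ^ k : ℕ) : ℝ) := by rw [Real.rpow_natCast]; push_cast; ring
  · calc (2 : ℝ) ^ ((na dmin dmax k m : ℝ) * R2)
        ≤ (2 : ℝ) ^ (((na dmin dmax k m + m : ℕ) : ℕ) : ℝ) :=
        Real.rpow_le_rpow_of_exponent_le one_le_two h2
      _ = ((2 ^ (na dmin dmax k m + m) : ℕ) : ℝ) := by
          rw [Real.rpow_natCast]; push_cast; ring
  · intro d hd
    have hz : avgErr Wex d (fun m1 => enc1 dmin dmax k m (e1.symm m1))
        (fun _ m2 => enc2 dmin dmax k m (e2.symm m2))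
        (fun y => ((e1 (g y).1), (e2 (g y).2))) = 0 := by
      apply avgErr_zero_of_correct
      intro m1 m2
      rw [hg d hd (e1.symm m1) (e2.symm m2)]
      simp
    rw [hz]
    exact le_of_lt hε

end ACMACPaper

namespace ACMACPaper

/-- The trapezoidal target region. -/
def Trap : Set (ℝ × ℝ) := {R : ℝ × ℝ | 0 ≤ R.1 ∧ 0 ≤ R.2 ∧ R.1 ≤ 1 ∧ R.1 + R.2 ≤ 2}

lemma Trap_closed : IsClosed Trap := by
  have : Trap = {R : ℝ × ℝ | 0 ≤ R.1} ∩ ({R | 0 ≤ R.2} ∩ ({R | R.1 ≤ 1} ∩ {R | R.1 + R.2 ≤ 2})) := by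
    ext R; simp [Trap, Set.mem_setOf_eq, and_assoc]
  rw [this]
  refine (isClosed_le continuous_const continuous_fst).inter
    ((isClosed_le continuous_const continuous_snd).inter
      ((isClosed_le continuous_fst continuous_const).inter
        (isClosed_le (continuous_fst.add continuous_snd) continuous_const)))

lemma no_rate_gap {a : ℝ} (ha : 0 < a)
    (h : ∀ ε : ℝ, 0 < ε → ε < 1 →
      ∃ n : ℕ, 1 ≤ n ∧ (1 - ε) * (2 : ℝ) ^ ((n : ℝ) * a) ≤ 1) : False := by
  set x := (2 : ℝ) ^ (-a) with hx
  have hlt : x < 1 := Real.rpow_lt_one_of_one_lt_of_neg one_lt_two (by linarith)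
  have hxpos : (0 : ℝ) < x := Real.rpow_pos_of_pos two_pos _
  set ε := (1 - x) / 2 with hε
  have hε0 : 0 < ε := by rw [hε]; linarith
  have hε1 : ε < 1 := by rw [hε]; linarith
  obtain ⟨n, hn1, hle⟩ := h ε hε0 hε1
  have hna : a ≤ (n : ℝ) * a := by
    have : (1 : ℝ) ≤ (n : ℝ) := by exact_mod_cast hn1
    nlinarith
  have h1 : (2 : ℝ) ^ a ≤ (2 : ℝ) ^ ((n : ℝ) * a) :=
    Real.rpow_le_rpow_of_exponent_le one_le_two hna
  have h2 : (1 - ε) * (2 : ℝ) ^ a ≤ 1 :=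
    le_trans (mul_le_mul_of_nonneg_left h1 (by linarith)) hle
  have h3 : x * (2 : ℝ) ^ a = 1 := by
    rw [hx, ← Real.rpow_add two_pos]; simp
  have hy : (0 : ℝ) < (2 : ℝ) ^ a := Real.rpow_pos_of_pos two_pos _
  have h4 : x * (2 : ℝ) ^ a < (2 : ℝ) ^ a := by nlinarith
  have h5 : (1 : ℝ) < (2 : ℝ) ^ a := by linarith [h3 ▸ h4]
  have h6 : 1 - ε = (1 + x) / 2 := by rw [hε]; ring
  rw [h6] at h2
  nlinarith

/-- The converse: every ACC-MAC achievable pair lies in the trapezoid. -/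
lemma ach_subset_Trap (dmin dmax : ℕ) :
    {R : ℝ × ℝ | ACCMACAchievable Wex dmin dmax R} ⊆ Trap := by
  rintro ⟨R1, R2⟩ ⟨h1, h2, hach⟩
  have h0D : (0 : ℤ) ∈ delaySet dmin dmax := by
    unfold delaySet; rw [Finset.mem_Icc]; omega
  have key : ∀ ε : ℝ, 0 < ε → ε < 1 →
      ∃ n : ℕ, 1 ≤ n ∧ (1 - ε) * (2 : ℝ) ^ ((n : ℝ) * (R1 - 1)) ≤ 1
        ∧ (1 - ε) * (2 : ℝ) ^ ((n : ℝ) * (R1 + R2 - 2)) ≤ 1 := by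
    intro ε hε0 hε1
    obtain ⟨n, K1, K2, f1, f2, g, hn, hK1, hK2, herr⟩ := hach ε hε0
    have hK1' : 1 ≤ K1 := by
      have : (0 : ℝ) < (K1 : ℝ) := lt_of_lt_of_le (Real.rpow_pos_of_pos two_pos _) hK1
      exact_mod_cast Nat.one_le_cast.mpr (by exact_mod_cast Nat.cast_pos.mp this)
    have hK2' : 1 ≤ K2 := by
      have : (0 : ℝ) < (K2 : ℝ) := lt_of_lt_of_le (Real.rpow_pos_of_pos two_pos _) hK2
      exact_mod_cast Nat.one_le_cast.mpr (by exact_mod_cast Nat.cast_pos.mp this)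
    obtain ⟨hc1, hc2⟩ := counting_converse hK1' hK2' f1 f2 g (herr 0 h0D)
    have hεle : (0 : ℝ) ≤ 1 - ε := by linarith
    have hp2 : (0 : ℝ) < (2 : ℝ) ^ ((n : ℝ)) := Real.rpow_pos_of_pos two_pos _
    have hp4 : (0 : ℝ) < (2 : ℝ) ^ (2 * (n : ℝ)) := Real.rpow_pos_of_pos two_pos _
    refine ⟨n, hn, ?_, ?_⟩
    · have hchain : (1 - ε) * (2 : ℝ) ^ ((n : ℝ) * R1) ≤ (2 : ℝ) ^ ((n : ℝ)) := by
        calc (1 - ε) * (2 : ℝ) ^ ((n : ℝ) * R1) ≤ (1 - ε) * (K1 : ℝ) :=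
            mul_le_mul_of_nonneg_left hK1 hεle
          _ ≤ (2 : ℝ) ^ n := hc1
          _ = (2 : ℝ) ^ ((n : ℝ)) := (Real.rpow_natCast 2 n).symm
      have hsplit : (2 : ℝ) ^ ((n : ℝ) * R1)
          = (2 : ℝ) ^ ((n : ℝ)) * (2 : ℝ) ^ ((n : ℝ) * (R1 - 1)) := by
        rw [← Real.rpow_add two_pos]; ring_nf
      rw [hsplit] at hchain
      have := (mul_le_mul_iff_of_pos_right hp2).mpr (le_refl (1 : ℝ))
      nlinarith [hchain, hp2]
    · have hKK : (2 : ℝ) ^ ((n : ℝ) * (R1 + R2)) ≤ (K1 : ℝ) * (K2 : ℝ) := by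
        have : (2 : ℝ) ^ ((n : ℝ) * (R1 + R2))
            = (2 : ℝ) ^ ((n : ℝ) * R1) * (2 : ℝ) ^ ((n : ℝ) * R2) := by
          rw [← Real.rpow_add two_pos]; ring_nf
        rw [this]
        have hK1pos : (0 : ℝ) < (2 : ℝ) ^ ((n : ℝ) * R1) := Real.rpow_pos_of_pos two_pos _
        have hK2pos : (0 : ℝ) < (2 : ℝ) ^ ((n : ℝ) * R2) := Real.rpow_pos_of_pos two_pos _
        exact mul_le_mul hK1 hK2 (le_of_lt hK2pos) (by positivity)
      have hchain : (1 - ε) * (2 : ℝ) ^ ((n : ℝ) * (R1 + R2)) ≤ (2 : ℝ) ^ (2 * (n : ℝ)) := by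
        calc (1 - ε) * (2 : ℝ) ^ ((n : ℝ) * (R1 + R2)) ≤ (1 - ε) * ((K1 : ℝ) * (K2 : ℝ)) :=
            mul_le_mul_of_nonneg_left hKK hεle
          _ ≤ (4 : ℝ) ^ n := hc2
          _ = (2 : ℝ) ^ (2 * (n : ℝ)) := by
            rw [show (4 : ℝ) = (2 : ℝ) ^ (2 : ℕ) by norm_num, ← pow_mul,
              ← Real.rpow_natCast 2 (2 * n)]
            push_cast; ring_nf
      have hsplit : (2 : ℝ) ^ ((n : ℝ) * (R1 + R2))
          = (2 : ℝ) ^ (2 * (n : ℝ)) * (2 : ℝ) ^ ((n : ℝ) * (R1 + R2 - 2)) := by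
        rw [← Real.rpow_add two_pos]; ring_nf
      rw [hsplit] at hchain
      nlinarith [hchain, hp4]
  constructor
  · exact h1
  refine ⟨h2, ?_, ?_⟩
  · by_contra hgt
    push_neg at hgt
    exact no_rate_gap (by linarith : (0:ℝ) < R1 - 1)
      (fun ε hε0 hε1 => (key ε hε0 hε1).imp (fun n hn => ⟨hn.1, hn.2.1⟩))
  · by_contra hgt
    push_neg at hgt
    exact no_rate_gap (by linarith : (0:ℝ) < R1 + R2 - 2)
      (fun ε hε0 hε1 => (key ε hε0 hε1).imp (fun n hn => ⟨hn.1, hn.2.2⟩))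

end ACMACPaper

namespace ACMACPaper

lemma mac_to_acc {dmin dmax : ℕ} {R : ℝ × ℝ}
    (h : MACAchievable Wex dmin dmax R) : ACCMACAchievable Wex dmin dmax R := by
  obtain ⟨h1, h2, h3⟩ := h
  refine ⟨h1, h2, fun ε hε => ?_⟩
  obtain ⟨n, K1, K2, f1, f2, g, hn, hK1, hK2, herr⟩ := h3 ε hε
  exact ⟨n, K1, K2, f1, fun _ m2 => f2 m2, g, hn, hK1, hK2, herr⟩

set_option maxHeartbeats 1000000 in
/-- Density: every point of the trapezoid is in the closure of the
(non-cognitive) achievable region. -/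
lemma Trap_sub_closure (dmin dmax : ℕ) :
    Trap ⊆ closure {R : ℝ × ℝ | MACAchievable Wex dmin dmax R} := by
  rintro ⟨a, b⟩ ⟨ha0, hb0, ha1, hab⟩
  rw [Metric.mem_closure_iff]
  intro δ hδ
  set C : ℕ := 2 * (dmin + dmax) + 2 with hC
  obtain ⟨N, hN⟩ := exists_nat_gt (((C : ℝ) + 1) / δ)
  have hN1 : ((C : ℝ) + 1) < δ * N := by
    rw [div_lt_iff₀ hδ] at hN; linarith
  have hNpos : 0 < N := by
    by_contra hc
    push_neg at hc
    have h0 : N = 0 := by omega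
    rw [h0] at hN1
    push_cast at hN1
    nlinarith [hN1, (Nat.cast_nonneg C : (0:ℝ) ≤ (C:ℝ))]
  set k : ℕ := ⌈a * (N : ℝ)⌉₊ with hk
  have hkle : k ≤ N := by
    rw [hk]
    exact Nat.ceil_le.mpr (by nlinarith [ha1, (Nat.cast_pos.mpr hNpos : (0:ℝ) < (N:ℝ))])
  set m : ℕ := N - k with hm
  set n : ℕ := na dmin dmax k m with hn
  have hnN : n = N + C := by
    rw [hn, hC, hm]; unfold na; omega
  have hn0 : (0 : ℝ) < (n : ℝ) := by
    have : 0 < n := by omega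
    exact_mod_cast this
  have hkge : a * (N : ℝ) ≤ (k : ℝ) := Nat.le_ceil _
  have hkle1 : (k : ℝ) ≤ a * (N : ℝ) + 1 :=
    le_of_lt (Nat.ceil_lt_add_one (by positivity))
  have hncast : (n : ℝ) = (N : ℝ) + (C : ℝ) := by rw [hnN]; push_cast; ring
  have hmcast : (m : ℝ) = (N : ℝ) - (k : ℝ) := by
    rw [hm]; push_cast [Nat.cast_sub hkle]; ring
  have hnm : ((n + m : ℕ) : ℝ) = (n : ℝ) + (m : ℝ) := by push_cast; ring
  set R1 : ℝ := min a ((k : ℝ) / (n : ℝ)) with hR1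
  set R2 : ℝ := min b (((n + m : ℕ) : ℝ) / (n : ℝ)) with hR2
  have hR10 : 0 ≤ R1 := le_min ha0 (by positivity)
  have hR20 : 0 ≤ R2 := le_min hb0 (by positivity)
  have hach : MACAchievable Wex dmin dmax (R1, R2) := by
    apply ach_point dmin dmax k m R1 R2 hR10 hR20
    · calc (n : ℝ) * R1 ≤ (n : ℝ) * ((k : ℝ) / (n : ℝ)) :=
          mul_le_mul_of_nonneg_left (min_le_right _ _) (le_of_lt hn0)
        _ = (k : ℝ) := by field_simp
    · calc (n : ℝ) * R2 ≤ (n : ℝ) * (((n + m : ℕ) : ℝ) / (n : ℝ)) :=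
          mul_le_mul_of_nonneg_left (min_le_right _ _) (le_of_lt hn0)
        _ = ((n + m : ℕ) : ℝ) := by field_simp
  refine ⟨(R1, R2), hach, ?_⟩
  rw [Prod.dist_eq]
  have hd1 : dist a R1 < δ := by
    rw [Real.dist_eq, abs_of_nonneg (by simp [hR1, min_le_left])]
    rcases min_cases a ((k : ℝ) / (n : ℝ)) with ⟨hmin, _⟩ | ⟨hmin, _⟩
    · rw [hR1, hmin]; simpa using hδ
    · rw [hR1, hmin]
      have hkey : a * (n : ℝ) < (k : ℝ) + δ * (n : ℝ) := by
        have hNn : (N : ℝ) ≤ (n : ℝ) := by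
          rw [hncast]; linarith [(Nat.cast_nonneg C : (0:ℝ) ≤ (C:ℝ))]
        nlinarith [hkge, ha1, ha0, hN1, hncast, (Nat.cast_nonneg C : (0:ℝ) ≤ (C:ℝ)), (Nat.cast_nonneg N : (0:ℝ) ≤ (N:ℝ))]
      have : (a - (k : ℝ) / (n : ℝ)) * (n : ℝ) < δ * (n : ℝ) := by
        have hcancel : ((k : ℝ) / (n : ℝ)) * (n : ℝ) = (k : ℝ) := by field_simp
        nlinarith [hkey, hcancel]
      exact lt_of_mul_lt_mul_right (by linarith [this]) (le_of_lt hn0)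
  have hd2 : dist b R2 < δ := by
    rw [Real.dist_eq, abs_of_nonneg (by simp [hR2, min_le_left])]
    rcases min_cases b (((n + m : ℕ) : ℝ) / (n : ℝ)) with ⟨hmin, _⟩ | ⟨hmin, _⟩
    · rw [hR2, hmin]; simpa using hδ
    · rw [hR2, hmin]
      have hkey : b * (n : ℝ) < ((n + m : ℕ) : ℝ) + δ * (n : ℝ) := by
        have hb2 : b ≤ 2 - a := by linarith
        nlinarith [hkle1, hb2, ha0, hb0, hN1, hncast, hmcast, hnm,
          (Nat.cast_nonneg C : (0:ℝ) ≤ (C:ℝ)), (Nat.cast_nonneg N : (0:ℝ) ≤ (N:ℝ)),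
          (Nat.cast_nonneg k : (0:ℝ) ≤ (k:ℝ)),
          mul_nonneg (le_of_lt hδ) (Nat.cast_nonneg C : (0:ℝ) ≤ (C:ℝ)),
          mul_nonneg ha0 (Nat.cast_nonneg C : (0:ℝ) ≤ (C:ℝ))]
      have : (b - ((n + m : ℕ) : ℝ) / (n : ℝ)) * (n : ℝ) < δ * (n : ℝ) := by
        have hcancel : (((n + m : ℕ) : ℝ) / (n : ℝ)) * (n : ℝ) = ((n + m : ℕ) : ℝ) := by
          field_simp
        nlinarith [hkey, hcancel]
      exact lt_of_mul_lt_mul_right (by linarith [this]) (le_of_lt hn0)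
  exact max_lt hd1 hd2

end ACMACPaper

namespace ACMACPaper

/-- **Example (CC-MAC side).** For the channel `Y = X2 mod X1` with
`X1 = {2,4}`, `X2 = Y = {0,1,2,3}`, the capacity region of the synchronous
codeword-cognitive MAC (the ACC-MAC with `D = {0}`) is the trapezoid
`{(R1,R2) : R1,R2 ≥ 0, R1 ≤ 1, R1+R2 ≤ 2}` (bits); it coincides with the
capacity region of the same channel with no side-information at either
transmitter, and it is the capacity region of the ACC-MAC for every finite
bounded delay set. -/
theorem example_ccmac_capacity :
    ACCMACCapacity Wex 0 0
        = {R : ℝ × ℝ | 0 ≤ R.1 ∧ 0 ≤ R.2 ∧ R.1 ≤ 1 ∧ R.1 + R.2 ≤ 2} ∧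
    MACCapacity Wex 0 0
        = {R : ℝ × ℝ | 0 ≤ R.1 ∧ 0 ≤ R.2 ∧ R.1 ≤ 1 ∧ R.1 + R.2 ≤ 2} ∧
    ∀ dmin dmax : ℕ,
      ACCMACCapacity Wex dmin dmax
        = {R : ℝ × ℝ | 0 ≤ R.1 ∧ 0 ≤ R.2 ∧ R.1 ≤ 1 ∧ R.1 + R.2 ≤ 2} := by
  have hT : ∀ dmin dmax : ℕ, ACCMACCapacity Wex dmin dmax = Trap := by
    intro dmin dmax
    apply Set.Subset.antisymm
    · exact closure_minimal (ach_subset_Trap dmin dmax) Trap_closed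
    · exact (Trap_sub_closure dmin dmax).trans
        (closure_mono (fun R hR => mac_to_acc hR))
  have hM : MACCapacity Wex 0 0 = Trap := by
    apply Set.Subset.antisymm
    · exact closure_minimal (fun R hR => ach_subset_Trap 0 0 (mac_to_acc hR)) Trap_closed
    · exact Trap_sub_closure 0 0
  exact ⟨hT 0 0, hM, hT⟩

end ACMACPaper
end
end
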